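/- arXiv:1410.1578 — 5 statements merged into one kernel-verified Lean document; each statement's English description precedes it below -/
import Mathlib

section
/- Let G be a finite group and (ρ, V) an irreducible finite-dimensional complex representation of G. Then Ad(ρ) is irreducible if and only if both Sym²(ρ) and Λ²(ρ) are irreducible. -/
open Module LinearMap

variable {G : Type*} [Group G] {V : Type*} [AddCommGroup V] [Module ℂ V]

/-- A submodule is invariant under a representation. -/
def Representation.IsInvariant (ρ : Representation ℂ G V) (U : Submodule ℂ V) : Prop :=
  ∀ g : G, ∀ v ∈ U, ρ g v ∈ U

/-- Irreducibility of a representation. -/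
def Representation.IsIrreducible' (ρ : Representation ℂ G V) : Prop :=
  Nontrivial V ∧ ∀ U : Submodule ℂ V, ρ.IsInvariant U → U = ⊥ ∨ U = ⊤

/-- Irreducibility of the subrepresentation carried by an invariant submodule `U`. -/
def Representation.IsIrreducibleOn (ρ : Representation ℂ G V) (U : Submodule ℂ V) : Prop :=
  U ≠ ⊥ ∧ ∀ U' ≤ U, ρ.IsInvariant U' → U' = ⊥ ∨ U' = U

/-- `Ad ρ` is irreducible: the conjugation action on trace-zero endomorphisms is irreducible. -/
def Representation.AdIrreducible (ρ : Representation ℂ G V) : Prop :=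
  (ρ.linHom ρ).IsIrreducibleOn (LinearMap.ker (LinearMap.trace ℂ V))

/-- Isomorphism of representations. -/
def RepEquiv {V₁ V₂ : Type*} [AddCommGroup V₁] [Module ℂ V₁] [AddCommGroup V₂] [Module ℂ V₂]
    (ρ₁ : Representation ℂ G V₁) (ρ₂ : Representation ℂ G V₂) : Prop :=
  ∃ e : V₁ ≃ₗ[ℂ] V₂, ∀ g v, e (ρ₁ g v) = ρ₂ g (e v)

/-- The subrepresentation on an invariant submodule. -/
def Representation.subRep (ρ : Representation ℂ G V) (U : Submodule ℂ V)
    (h : ρ.IsInvariant U) : Representation ℂ G U where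
  toFun g := (ρ g).restrict (fun v hv => h g v hv)
  map_one' := by ext v; simp [LinearMap.restrict_apply]
  map_mul' g₁ g₂ := by ext v; simp [LinearMap.restrict_apply]

lemma sl_invariant [FiniteDimensional ℂ V] (ρ : Representation ℂ G V) :
    (ρ.linHom ρ).IsInvariant (LinearMap.ker (LinearMap.trace ℂ V)) := by
  intro g f hf
  simp only [LinearMap.mem_ker] at hf ⊢
  simp only [Representation.linHom_apply]
  rw [← Module.End.mul_eq_comp, ← Module.End.mul_eq_comp, LinearMap.trace_mul_comm]
  rw [mul_assoc, ← map_mul, inv_mul_cancel, map_one, mul_one, hf]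

/-- The adjoint representation on trace-zero endomorphisms. -/
noncomputable def Representation.adRep [FiniteDimensional ℂ V] (ρ : Representation ℂ G V) :
    Representation ℂ G (LinearMap.ker (LinearMap.trace ℂ V)) :=
  (ρ.linHom ρ).subRep _ (sl_invariant ρ)

open TensorProduct in
/-- The symmetric square of `V`, realized as the submodule of symmetric tensors in `V ⊗ V`. -/
def symSquare (V : Type*) [AddCommGroup V] [Module ℂ V] : Submodule ℂ (V ⊗[ℂ] V) :=
  Submodule.span ℂ {x | ∃ v w : V, x = v ⊗ₜ[ℂ] w + w ⊗ₜ[ℂ] v}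

open TensorProduct in
/-- The alternating square of `V`, realized as the submodule of antisymmetric tensors in
`V ⊗ V`. -/
def altSquare (V : Type*) [AddCommGroup V] [Module ℂ V] : Submodule ℂ (V ⊗[ℂ] V) :=
  Submodule.span ℂ {x | ∃ v w : V, x = v ⊗ₜ[ℂ] w - w ⊗ₜ[ℂ] v}


section Aux

open Module LinearMap

variable {G : Type*} [Group G] {W : Type*} [AddCommGroup W] [Module ℂ W]

lemma rep_inv_apply (σ : Representation ℂ G W) (g : G) (v : W) : σ g⁻¹ (σ g v) = v := by
  rw [← Module.End.mul_apply, ← map_mul, inv_mul_cancel, map_one, Module.End.one_apply]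

lemma rep_apply_inv (σ : Representation ℂ G W) (g : G) (v : W) : σ g (σ g⁻¹ v) = v := by
  rw [← Module.End.mul_apply, ← map_mul, mul_inv_cancel, map_one, Module.End.one_apply]

/-- Membership in the invariants of `linHom σ σ` is the same as commuting with the action. -/
lemma mem_linHom_invariants_iff (σ : Representation ℂ G W) (f : W →ₗ[ℂ] W) :
    f ∈ (σ.linHom σ).invariants ↔ ∀ g v, f (σ g v) = σ g (f v) := by
  rw [Representation.mem_invariants]
  constructor
  · intro h g v
    have := LinearMap.congr_fun (h g) (σ g v)
    simpa [Representation.linHom_apply, rep_inv_apply] using this.symm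
  · intro h g
    ext v
    simp [Representation.linHom_apply, ← h g (σ g⁻¹ v), rep_apply_inv]

lemma isInvariant_sup {σ : Representation ℂ G W} {U₁ U₂ : Submodule ℂ W}
    (h₁ : σ.IsInvariant U₁) (h₂ : σ.IsInvariant U₂) : σ.IsInvariant (U₁ ⊔ U₂) := by
  intro g v hv
  obtain ⟨x, hx, y, hy, rfl⟩ := Submodule.mem_sup.1 hv
  rw [map_add]
  exact Submodule.add_mem_sup (h₁ g x hx) (h₂ g y hy)

lemma isInvariant_inf {σ : Representation ℂ G W} {U₁ U₂ : Submodule ℂ W}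
    (h₁ : σ.IsInvariant U₁) (h₂ : σ.IsInvariant U₂) : σ.IsInvariant (U₁ ⊓ U₂) :=
  fun g v hv => ⟨h₁ g v hv.1, h₂ g v hv.2⟩

/-- The projection onto `U₁` along `U₂`, as an endomorphism of `W`. -/
noncomputable def projOn (U₁ U₂ : Submodule ℂ W) (h : IsCompl U₁ U₂) : W →ₗ[ℂ] W :=
  U₁.subtype ∘ₗ U₁.projectionOnto U₂ h

lemma projOn_mem (U₁ U₂ : Submodule ℂ W) (h : IsCompl U₁ U₂) (v : W) :
    projOn U₁ U₂ h v ∈ U₁ := (U₁.projectionOnto U₂ h v).2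

lemma projOn_left {U₁ U₂ : Submodule ℂ W} (h : IsCompl U₁ U₂) {v : W} (hv : v ∈ U₁) :
    projOn U₁ U₂ h v = v := by
  simp [projOn, Submodule.projectionOnto_apply_left h ⟨v, hv⟩]

lemma projOn_right {U₁ U₂ : Submodule ℂ W} (h : IsCompl U₁ U₂) {v : W} (hv : v ∈ U₂) :
    projOn U₁ U₂ h v = 0 := by
  simp [projOn, Submodule.projectionOnto_apply_of_mem_right h hv]

lemma projOn_add (U₁ U₂ : Submodule ℂ W) (h : IsCompl U₁ U₂) (v : W) :
    projOn U₁ U₂ h v + projOn U₂ U₁ h.symm v = v := by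
  obtain ⟨x, y, hx, hy, rfl⟩ := Submodule.codisjoint_iff_exists_add_eq.mp h.codisjoint v
  rw [map_add, map_add, projOn_left h hx, projOn_right h hy,
    projOn_left h.symm hy, projOn_right h.symm hx]
  abel

/-- An equivariant projection: projecting onto an invariant submodule along an invariant
complement commutes with the action. -/
lemma projOn_comm {σ : Representation ℂ G W} {U₁ U₂ : Submodule ℂ W}
    (h₁ : σ.IsInvariant U₁) (h₂ : σ.IsInvariant U₂) (h : IsCompl U₁ U₂) (g : G) (v : W) :
    projOn U₁ U₂ h (σ g v) = σ g (projOn U₁ U₂ h v) := by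
  obtain ⟨x, y, hx, hy, rfl⟩ := Submodule.codisjoint_iff_exists_add_eq.mp h.codisjoint v
  rw [map_add, map_add, map_add, projOn_left h hx, projOn_right h hy, add_zero,
    projOn_left h (h₁ g x hx), projOn_right h (h₂ g y hy), add_zero]

lemma projOn_mem_invariants {σ : Representation ℂ G W} {U₁ U₂ : Submodule ℂ W}
    (h₁ : σ.IsInvariant U₁) (h₂ : σ.IsInvariant U₂) (h : IsCompl U₁ U₂) :
    projOn U₁ U₂ h ∈ (σ.linHom σ).invariants :=
  (mem_linHom_invariants_iff σ _).2 fun g v => projOn_comm h₁ h₂ h g v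

variable [FiniteDimensional ℂ W]

/-- Maschke's theorem: every invariant submodule has an invariant complement. -/
lemma exists_invariant_isCompl [Finite G] (σ : Representation ℂ G W) (U : Submodule ℂ W)
    (hU : σ.IsInvariant U) : ∃ U' : Submodule ℂ W, σ.IsInvariant U' ∧ IsCompl U U' := by
  cases nonempty_fintype G
  obtain ⟨C, hC⟩ := Submodule.exists_isCompl U
  set π : W →ₗ[ℂ] W := projOn U C hC with hπ
  set p : W →ₗ[ℂ] W := ((Fintype.card G : ℂ)⁻¹) • ∑ g : G, σ g ∘ₗ π ∘ₗ σ g⁻¹ with hp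
  have hcard : (Fintype.card G : ℂ) ≠ 0 := by
    exact_mod_cast Fintype.card_ne_zero
  have hpmem : ∀ v, p v ∈ U := by
    intro v
    rw [hp]
    simp only [LinearMap.smul_apply, LinearMap.sum_apply, LinearMap.comp_apply]
    exact Submodule.smul_mem _ _ (Submodule.sum_mem _ fun g _ =>
      hU g _ (projOn_mem U C hC _))
  have hpfix : ∀ v ∈ U, p v = v := by
    intro v hv
    rw [hp]
    simp only [LinearMap.smul_apply, LinearMap.sum_apply, LinearMap.comp_apply]
    have : ∀ g : G, σ g (π (σ g⁻¹ v)) = v := by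
      intro g
      rw [projOn_left hC (hU g⁻¹ v hv), rep_apply_inv]
    rw [Finset.sum_congr rfl fun g _ => this g, Finset.sum_const, Finset.card_univ,
      ← Nat.cast_smul_eq_nsmul ℂ, smul_smul, inv_mul_cancel₀ hcard, one_smul]
  have hpcomm : ∀ g v, p (σ g v) = σ g (p v) := by
    intro h v
    rw [hp]
    simp only [LinearMap.smul_apply, LinearMap.sum_apply, LinearMap.comp_apply, map_smul,
      map_sum]
    congr 1
    refine (Fintype.sum_equiv (Equiv.mulLeft h) _ _ ?_).symm
    intro g
    simp only [Equiv.coe_mulLeft, map_mul, mul_inv_rev, Module.End.mul_apply, rep_inv_apply]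
  refine ⟨LinearMap.ker p, ?_, ?_⟩
  · intro g v hv
    rw [LinearMap.mem_ker] at hv ⊢
    rw [hpcomm g v, hv, map_zero]
  · constructor
    · rw [Submodule.disjoint_def]
      intro x hxU hxK
      rw [LinearMap.mem_ker] at hxK
      rw [← hpfix x hxU, hxK]
    · rw [codisjoint_iff_le_sup]
      intro v _
      have : v - p v ∈ LinearMap.ker p := by
        rw [LinearMap.mem_ker, map_sub, hpfix _ (hpmem v), sub_self]
      have hdecomp : v = p v + (v - p v) := by abel
      rw [hdecomp]
      exact Submodule.add_mem_sup (hpmem v) this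

end Aux


section Main

open Module LinearMap

variable {G : Type*} [Group G] [Finite G] {W : Type*} [AddCommGroup W] [Module ℂ W]
  [FiniteDimensional ℂ W]

lemma finrank_invariants_three_le (σ : Representation ℂ G W) {U₁ U₂ : Submodule ℂ W}
    (h₁ : σ.IsInvariant U₁) (h₂ : σ.IsInvariant U₂) (hc : IsCompl U₁ U₂) (hb₂ : U₂ ≠ ⊥)
    {N : Submodule ℂ W} (hNinv : σ.IsInvariant N) (hNle : N ≤ U₁) (hN0 : N ≠ ⊥)
    (hNne : N ≠ U₁) : 3 ≤ finrank ℂ (σ.linHom σ).invariants := by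
  obtain ⟨N', hN'inv, hcN⟩ := exists_invariant_isCompl σ N hNinv
  set M := N' ⊓ U₁ with hM
  have hMinv : σ.IsInvariant M := isInvariant_inf hN'inv h₁
  have hNM : N ⊔ M = U₁ := by
    rw [hM, ← sup_inf_assoc_of_le N' hNle, codisjoint_iff.mp hcN.codisjoint, top_inf_eq]
  have hMne : M ≠ ⊥ := by
    intro h; rw [h, sup_bot_eq] at hNM; exact hNne hNM
  have hMle : M ≤ U₁ := inf_le_right
  have hcomp : IsCompl N (M ⊔ U₂) := by
    constructor
    · rw [Submodule.disjoint_def]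
      intro x hxN hx
      obtain ⟨m, hm, u, hu, rfl⟩ := Submodule.mem_sup.1 hx
      have huU₁ : u ∈ U₁ := by
        have := Submodule.sub_mem U₁ (hNle hxN) hm.2
        simpa using this
      have hu0 : u = 0 := Submodule.disjoint_def.1 hc.disjoint u huU₁ hu
      rw [hu0, add_zero] at hxN ⊢
      exact Submodule.disjoint_def.1 hcN.disjoint m hxN hm.1
    · rw [codisjoint_iff, ← sup_assoc, hNM, codisjoint_iff.mp hc.codisjoint]
  obtain ⟨n, hn, hn0⟩ := Submodule.exists_mem_ne_zero_of_ne_bot hN0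
  obtain ⟨m, hm, hm0⟩ := Submodule.exists_mem_ne_zero_of_ne_bot hMne
  obtain ⟨u, hu, hu0⟩ := Submodule.exists_mem_ne_zero_of_ne_bot hb₂
  set p := projOn N (M ⊔ U₂) hcomp with hp
  set q := projOn U₁ U₂ hc with hq
  set r := projOn U₂ U₁ hc.symm with hr
  have hli : LinearIndependent ℂ ![p, q, r] := by
    rw [Fintype.linearIndependent_iff]
    intro c hc0 i
    rw [Fin.sum_univ_three] at hc0
    simp only [Matrix.cons_val_zero, Matrix.cons_val_one, Matrix.head_cons,
      Matrix.cons_val_two, Matrix.tail_cons] at hc0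
    have em := LinearMap.congr_fun hc0 m
    have en := LinearMap.congr_fun hc0 n
    have eu := LinearMap.congr_fun hc0 u
    rw [LinearMap.add_apply, LinearMap.add_apply, LinearMap.smul_apply, LinearMap.smul_apply,
      LinearMap.smul_apply, LinearMap.zero_apply, hp, hq, hr,
      projOn_right hcomp (Submodule.mem_sup_left hm), projOn_left hc (hMle hm),
      projOn_right hc.symm (hMle hm), smul_zero, smul_zero, zero_add, add_zero] at em
    have hc1 : c 1 = 0 := by
      rcases smul_eq_zero.1 em with h | h
      · exact h
      · exact absurd h hm0
    rw [LinearMap.add_apply, LinearMap.add_apply, LinearMap.smul_apply, LinearMap.smul_apply,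
      LinearMap.smul_apply, LinearMap.zero_apply, hp, hq, hr,
      projOn_left hcomp hn, projOn_left hc (hNle hn),
      projOn_right hc.symm (hNle hn), smul_zero, add_zero, hc1, zero_smul, add_zero] at en
    have hc0' : c 0 = 0 := by
      rcases smul_eq_zero.1 en with h | h
      · exact h
      · exact absurd h hn0
    rw [LinearMap.add_apply, LinearMap.add_apply, LinearMap.smul_apply, LinearMap.smul_apply,
      LinearMap.smul_apply, LinearMap.zero_apply, hp, hq, hr,
      projOn_right hcomp (Submodule.mem_sup_right hu), projOn_right hc hu,
      projOn_left hc.symm hu, smul_zero, smul_zero, zero_add, zero_add] at eu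
    have hc2 : c 2 = 0 := by
      rcases smul_eq_zero.1 eu with h | h
      · exact h
      · exact absurd h hu0
    fin_cases i <;> assumption
  have hle : Submodule.span ℂ (Set.range ![p, q, r]) ≤ (σ.linHom σ).invariants := by
    rw [Submodule.span_le, Set.range_subset_iff]
    intro i
    fin_cases i
    · exact projOn_mem_invariants hNinv (isInvariant_sup hMinv h₂) hcomp
    · exact projOn_mem_invariants h₁ h₂ hc
    · exact projOn_mem_invariants h₂ h₁ hc.symm
  calc 3 = finrank ℂ (Submodule.span ℂ (Set.range ![p, q, r])) := by
        rw [finrank_span_eq_card hli, Fintype.card_fin]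
    _ ≤ finrank ℂ (σ.linHom σ).invariants := Submodule.finrank_mono hle

lemma schur_offdiag (σ : Representation ℂ G W) {U₁ U₂ : Submodule ℂ W}
    (h₁ : σ.IsInvariant U₁) (h₂ : σ.IsInvariant U₂) (hc : IsCompl U₁ U₂)
    (irr₁ : σ.IsIrreducibleOn U₁) (irr₂ : σ.IsIrreducibleOn U₂)
    (hd : finrank ℂ U₁ ≠ finrank ℂ U₂) {f : W →ₗ[ℂ] W}
    (hf : ∀ g v, f (σ g v) = σ g (f v)) :
    ∀ v ∈ U₂, projOn U₁ U₂ hc (f v) = 0 := by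
  set q := projOn U₁ U₂ hc with hqdef
  set K := U₂ ⊓ LinearMap.ker (q ∘ₗ f) with hK
  have hKinv : σ.IsInvariant K := by
    intro g v hv
    refine ⟨h₂ g v hv.1, ?_⟩
    have hv2 : q (f v) = 0 := hv.2
    rw [SetLike.mem_coe, LinearMap.mem_ker, LinearMap.comp_apply, hf, hqdef, projOn_comm h₁ h₂ hc, ← hqdef,
      hv2, map_zero]
  rcases irr₂.2 K inf_le_left hKinv with hKbot | hKtop
  · exfalso
    set R := Submodule.map (q ∘ₗ f) U₂ with hR
    have hRle : R ≤ U₁ := by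
      rintro x ⟨v, hv, rfl⟩
      exact projOn_mem _ _ _ _
    have hRinv : σ.IsInvariant R := by
      rintro g x ⟨v, hv, rfl⟩
      refine ⟨σ g v, h₂ g v hv, ?_⟩
      rw [LinearMap.comp_apply, LinearMap.comp_apply, hf, hqdef, projOn_comm h₁ h₂ hc]
    have hR0 : R ≠ ⊥ := by
      obtain ⟨u, hu, hu0⟩ := Submodule.exists_mem_ne_zero_of_ne_bot irr₂.1
      intro h
      have hmem : (q ∘ₗ f) u ∈ R := Submodule.mem_map_of_mem hu
      rw [h, Submodule.mem_bot] at hmem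
      have : u ∈ K := ⟨hu, LinearMap.mem_ker.2 hmem⟩
      rw [hKbot, Submodule.mem_bot] at this
      exact hu0 this
    have hRU₁ : R = U₁ := (irr₁.2 R hRle hRinv).resolve_left hR0
    have hinj : Function.Injective ((q ∘ₗ f) ∘ₗ U₂.subtype) := by
      rw [← LinearMap.ker_eq_bot, LinearMap.ker_eq_bot']
      intro x hx
      have : (x : W) ∈ K := ⟨x.2, LinearMap.mem_ker.2 hx⟩
      rw [hKbot, Submodule.mem_bot] at this
      exact Subtype.ext this
    have hrange : LinearMap.range ((q ∘ₗ f) ∘ₗ U₂.subtype) = R := by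
      rw [LinearMap.range_comp, Submodule.range_subtype]
    have : finrank ℂ U₂ = finrank ℂ U₁ := by
      rw [← hRU₁, ← hrange]
      exact (LinearMap.finrank_range_of_inj hinj).symm
    exact hd this.symm
  · intro v hv
    have : v ∈ K := hKtop ▸ hv
    exact this.2

lemma schur_diag (σ : Representation ℂ G W) {U₁ U₂ : Submodule ℂ W}
    (h₁ : σ.IsInvariant U₁) (h₂ : σ.IsInvariant U₂) (hc : IsCompl U₁ U₂)
    (irr₁ : σ.IsIrreducibleOn U₁) {f : W →ₗ[ℂ] W}
    (hf : ∀ g v, f (σ g v) = σ g (f v)) :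
    ∃ a : ℂ, ∀ v ∈ U₁, projOn U₁ U₂ hc (f v) = a • v := by
  set q := projOn U₁ U₂ hc with hqdef
  have hmem : ∀ x ∈ U₁, (q ∘ₗ f) x ∈ U₁ := fun x _ => projOn_mem _ _ _ _
  set e : Module.End ℂ U₁ := (q ∘ₗ f).restrict hmem with he
  haveI : Nontrivial U₁ := Submodule.nontrivial_iff_ne_bot.2 irr₁.1
  obtain ⟨a, ha⟩ := Module.End.exists_eigenvalue e
  obtain ⟨x, hx⟩ := ha.exists_hasEigenvector
  set K := U₁ ⊓ LinearMap.ker ((q ∘ₗ f) - a • LinearMap.id) with hK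
  have hmemK : ∀ v, v ∈ K ↔ v ∈ U₁ ∧ q (f v) = a • v := by
    intro v
    rw [hK]
    constructor
    · rintro ⟨hv1, hv2⟩
      rw [SetLike.mem_coe, LinearMap.mem_ker, LinearMap.sub_apply, LinearMap.smul_apply, LinearMap.id_apply,
        sub_eq_zero] at hv2
      exact ⟨hv1, hv2⟩
    · rintro ⟨hv1, hv2⟩
      refine ⟨hv1, ?_⟩
      rw [SetLike.mem_coe, LinearMap.mem_ker, LinearMap.sub_apply, LinearMap.smul_apply, LinearMap.id_apply,
        sub_eq_zero]
      exact hv2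
  have hKne : K ≠ ⊥ := by
    intro h
    have hxK : (x : W) ∈ K := by
      rw [hmemK]
      refine ⟨x.2, ?_⟩
      have := hx.apply_eq_smul
      have := congrArg (Subtype.val) this
      rw [he] at this
      simpa [LinearMap.restrict_coe_apply] using this
    rw [h, Submodule.mem_bot] at hxK
    exact hx.2 (Subtype.ext hxK)
  have hKinv : σ.IsInvariant K := by
    intro g v hv
    rw [hmemK] at hv ⊢
    refine ⟨h₁ g v hv.1, ?_⟩
    rw [hf, hqdef, projOn_comm h₁ h₂ hc, ← hqdef, hv.2, map_smul]
  have hKU : K = U₁ := (irr₁.2 K inf_le_left hKinv).resolve_left hKne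
  refine ⟨a, fun v hv => ?_⟩
  have : v ∈ K := hKU ▸ hv
  exact ((hmemK v).1 this).2

/-- The key dichotomy: for a decomposition `W = U₁ ⊕ U₂` into nonzero invariant submodules of
different dimensions, both pieces are irreducible iff the commutant is 2-dimensional. -/
lemma irr_pair_iff_finrank_two (σ : Representation ℂ G W) {U₁ U₂ : Submodule ℂ W}
    (h₁ : σ.IsInvariant U₁) (h₂ : σ.IsInvariant U₂) (hc : IsCompl U₁ U₂)
    (hb₁ : U₁ ≠ ⊥) (hb₂ : U₂ ≠ ⊥) (hd : finrank ℂ U₁ ≠ finrank ℂ U₂) :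
    (σ.IsIrreducibleOn U₁ ∧ σ.IsIrreducibleOn U₂) ↔
      finrank ℂ (σ.linHom σ).invariants = 2 := by
  constructor
  · rintro ⟨irr₁, irr₂⟩
    set q := projOn U₁ U₂ hc with hqdef
    set r := projOn U₂ U₁ hc.symm with hrdef
    have hqmem := projOn_mem_invariants h₁ h₂ hc
    have hrmem := projOn_mem_invariants h₂ h₁ hc.symm
    have hspan : (σ.linHom σ).invariants = Submodule.span ℂ {q, r} := by
      apply le_antisymm
      · intro f hf
        have hfc := (mem_linHom_invariants_iff σ f).1 hf
        obtain ⟨a, haa⟩ := schur_diag σ h₁ h₂ hc irr₁ hfc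
        obtain ⟨b, hbb⟩ := schur_diag σ h₂ h₁ hc.symm irr₂ hfc
        have h21 := schur_offdiag σ h₂ h₁ hc.symm irr₂ irr₁ (Ne.symm hd) hfc
        have h12 := schur_offdiag σ h₁ h₂ hc irr₁ irr₂ hd hfc
        rw [Submodule.mem_span_pair]
        refine ⟨a, b, ?_⟩
        ext v
        have hv : q v + r v = v := projOn_add _ _ hc v
        have e1 : f (q v) = a • q v := by
          have d1 := haa (q v) (projOn_mem _ _ _ _)
          have d2 := h21 (q v) (projOn_mem _ _ _ _)
          have d3 := projOn_add U₁ U₂ hc (f (q v))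
          rw [← hqdef, ← hrdef] at d3
          rw [d1, d2, add_zero] at d3
          exact d3.symm
        have e2 : f (r v) = b • r v := by
          have d1 := hbb (r v) (projOn_mem _ _ _ _)
          have d2 := h12 (r v) (projOn_mem _ _ _ _)
          have d3 := projOn_add U₁ U₂ hc (f (r v))
          rw [← hqdef, ← hrdef] at d3
          rw [d1, d2, zero_add] at d3
          exact d3.symm
        rw [LinearMap.add_apply, LinearMap.smul_apply, LinearMap.smul_apply]
        conv_rhs => rw [← hv, map_add, e1, e2]
      · rw [Submodule.span_le]
        intro x hx
        simp only [Set.mem_insert_iff, Set.mem_singleton_iff] at hx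
        rcases hx with rfl | rfl
        · exact hqmem
        · exact hrmem
    obtain ⟨u₁, hu₁, hu₁0⟩ := Submodule.exists_mem_ne_zero_of_ne_bot hb₁
    obtain ⟨u₂, hu₂, hu₂0⟩ := Submodule.exists_mem_ne_zero_of_ne_bot hb₂
    have hli : LinearIndependent ℂ ![q, r] := by
      rw [LinearIndependent.pair_iff]
      intro s t hst
      have e1 := LinearMap.congr_fun hst u₁
      have e2 := LinearMap.congr_fun hst u₂
      rw [LinearMap.add_apply, LinearMap.smul_apply, LinearMap.smul_apply, LinearMap.zero_apply,
        hqdef, hrdef, projOn_left hc hu₁, projOn_right hc.symm hu₁, smul_zero, add_zero] at e1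
      rw [LinearMap.add_apply, LinearMap.smul_apply, LinearMap.smul_apply, LinearMap.zero_apply,
        hqdef, hrdef, projOn_right hc hu₂, projOn_left hc.symm hu₂, smul_zero, zero_add] at e2
      constructor
      · rcases smul_eq_zero.1 e1 with h | h
        · exact h
        · exact absurd h hu₁0
      · rcases smul_eq_zero.1 e2 with h | h
        · exact h
        · exact absurd h hu₂0
    have hrange : ({q, r} : Set (W →ₗ[ℂ] W)) = Set.range ![q, r] := by
      ext x
      simp only [Set.mem_insert_iff, Set.mem_singleton_iff, Set.mem_range, Fin.exists_fin_two,
        Matrix.cons_val_zero, Matrix.cons_val_one, Matrix.head_cons]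
      tauto
    rw [hspan, hrange, finrank_span_eq_card hli, Fintype.card_fin]
  · intro h2
    constructor
    · refine ⟨hb₁, fun N hNle hNinv => ?_⟩
      by_contra hcon
      push_neg at hcon
      have := finrank_invariants_three_le σ h₁ h₂ hc hb₂ hNinv hNle hcon.1 hcon.2
      omega
    · refine ⟨hb₂, fun N hNle hNinv => ?_⟩
      by_contra hcon
      push_neg at hcon
      have := finrank_invariants_three_le σ h₂ h₁ hc.symm hb₁ hNinv hNle hcon.1 hcon.2
      omega

end Main


section Char

open Module LinearMap TensorProduct

variable {G : Type*} [Group G] {W : Type*} [AddCommGroup W] [Module ℂ W]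
  [FiniteDimensional ℂ W]

lemma finrank_invariants_eq_sum_trace [Fintype G] (τ : Representation ℂ G W) :
    (finrank ℂ τ.invariants : ℂ) = (Fintype.card G : ℂ)⁻¹ * ∑ g : G, trace ℂ W (τ g) := by
  have hcard : (Fintype.card G : ℂ) ≠ 0 := by exact_mod_cast Fintype.card_ne_zero
  letI : Invertible (Fintype.card G : ℂ) := invertibleOfNonzero hcard
  rw [← (Representation.isProj_averageMap τ).trace]
  simp only [Representation.averageMap, GroupAlgebra.average, map_smul, _root_.map_sum,
    MonoidAlgebra.of_apply, Representation.asAlgebraHom_single_one]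
  rw [smul_eq_mul, invOf_eq_inv]

lemma trace_linHom_apply (σ : Representation ℂ G W) (g : G) :
    trace ℂ (W →ₗ[ℂ] W) ((σ.linHom σ) g) = trace ℂ W (σ g⁻¹) * trace ℂ W (σ g) := by
  set b := Module.Free.chooseBasis ℂ W
  set e := dualTensorHomEquivOfBasis (N := W) b with hedef
  set m := TensorProduct.map (σ.dual g) (σ g) with hmdef
  have hpoint : ∀ x, e (m x) = (σ.linHom σ) g (e x) := by
    intro x
    have hcomm := LinearMap.congr_fun (Representation.dualTensorHom_comm σ σ g) x
    simpa [hedef, hmdef, dualTensorHomEquivOfBasis_apply] using hcomm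
  have heq : e.conj m = (σ.linHom σ) g := by
    refine LinearMap.ext fun f => ?_
    simp only [LinearEquiv.conj_apply, LinearMap.comp_apply, LinearEquiv.coe_coe]
    rw [hpoint, e.apply_symm_apply]
  have h1 : trace ℂ (W →ₗ[ℂ] W) ((σ.linHom σ) g) = trace ℂ _ m := by
    rw [← heq]; exact trace_conj' m e
  rw [h1, hmdef, trace_tensorProduct']
  congr 1
  exact trace_transpose' (σ g⁻¹)

end Char

section Key

open Module LinearMap

variable {G : Type*} [Group G] [Finite G] {V : Type*} [AddCommGroup V] [Module ℂ V]
  [FiniteDimensional ℂ V]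

lemma key_finrank_eq (ρ : Representation ℂ G V) :
    finrank ℂ (((ρ.tprod ρ).linHom (ρ.tprod ρ)).invariants) =
      finrank ℂ (((ρ.linHom ρ).linHom (ρ.linHom ρ)).invariants) := by
  cases nonempty_fintype G
  have h1 := finrank_invariants_eq_sum_trace ((ρ.tprod ρ).linHom (ρ.tprod ρ))
  have h2 := finrank_invariants_eq_sum_trace ((ρ.linHom ρ).linHom (ρ.linHom ρ))
  have t1 : ∀ h : G, trace ℂ _ ((ρ.tprod ρ) h) = trace ℂ V (ρ h) * trace ℂ V (ρ h) := by
    intro h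
    rw [Representation.tprod_apply]
    exact LinearMap.trace_tensorProduct' _ _
  have hterm : ∀ g : G, trace ℂ _ (((ρ.tprod ρ).linHom (ρ.tprod ρ)) g) =
      trace ℂ _ (((ρ.linHom ρ).linHom (ρ.linHom ρ)) g) := by
    intro g
    rw [trace_linHom_apply (ρ.tprod ρ) g, trace_linHom_apply (ρ.linHom ρ) g,
      trace_linHom_apply ρ g, trace_linHom_apply ρ g⁻¹, inv_inv, t1, t1]
    ring
  have : (finrank ℂ (((ρ.tprod ρ).linHom (ρ.tprod ρ)).invariants) : ℂ) =
      (finrank ℂ (((ρ.linHom ρ).linHom (ρ.linHom ρ)).invariants) : ℂ) := by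
    rw [h1, h2]
    congr 1
    exact Finset.sum_congr rfl fun g _ => hterm g
  exact_mod_cast this

end Key


section EndSide

open Module LinearMap

variable {G : Type*} [Group G] [Finite G] {V : Type*} [AddCommGroup V] [Module ℂ V]
  [FiniteDimensional ℂ V]

lemma span_id_invariant (ρ : Representation ℂ G V) :
    (ρ.linHom ρ).IsInvariant (ℂ ∙ (LinearMap.id : V →ₗ[ℂ] V)) := by
  intro g f hf
  rw [Submodule.mem_span_singleton] at hf ⊢
  obtain ⟨c, rfl⟩ := hf
  refine ⟨c, ?_⟩
  ext v
  simp only [Representation.linHom_apply, LinearMap.smul_apply, LinearMap.comp_apply,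
    LinearMap.id_apply, map_smul, rep_apply_inv]

lemma id_ne_zero (hdim : 2 ≤ finrank ℂ V) : (LinearMap.id : V →ₗ[ℂ] V) ≠ 0 := by
  haveI : Nontrivial V := Module.nontrivial_of_finrank_pos (R := ℂ) (by omega)
  obtain ⟨v, hv⟩ := exists_ne (0 : V)
  intro h
  exact hv (by simpa using LinearMap.congr_fun h v)

lemma isCompl_spanId_kerTrace (hdim : 2 ≤ finrank ℂ V) :
    IsCompl (ℂ ∙ (LinearMap.id : V →ₗ[ℂ] V)) (LinearMap.ker (LinearMap.trace ℂ V)) := by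
  have hn0 : (finrank ℂ V : ℂ) ≠ 0 := by
    simp only [ne_eq, Nat.cast_eq_zero]
    omega
  constructor
  · rw [Submodule.disjoint_def]
    intro x hx hker
    rw [Submodule.mem_span_singleton] at hx
    obtain ⟨c, rfl⟩ := hx
    rw [LinearMap.mem_ker, map_smul, trace_id, smul_eq_mul] at hker
    rcases mul_eq_zero.1 hker with h | h
    · rw [h, zero_smul]
    · exact absurd h hn0
  · rw [codisjoint_iff, eq_top_iff]
    intro f _
    have h1 : (trace ℂ V f / finrank ℂ V) • (LinearMap.id : V →ₗ[ℂ] V) ∈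
        (ℂ ∙ (LinearMap.id : V →ₗ[ℂ] V)) :=
      Submodule.smul_mem _ _ (Submodule.mem_span_singleton_self _)
    have h2 : f - (trace ℂ V f / finrank ℂ V) • (LinearMap.id : V →ₗ[ℂ] V) ∈
        LinearMap.ker (LinearMap.trace ℂ V) := by
      rw [LinearMap.mem_ker, map_sub, map_smul, trace_id, smul_eq_mul,
        div_mul_cancel₀ _ hn0, sub_self]
    have : f = (trace ℂ V f / finrank ℂ V) • LinearMap.id +
        (f - (trace ℂ V f / finrank ℂ V) • LinearMap.id) := by abel
    rw [this]
    exact Submodule.add_mem_sup h1 h2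

lemma finrank_kerTrace (hdim : 2 ≤ finrank ℂ V) :
    finrank ℂ (LinearMap.ker (LinearMap.trace ℂ V)) = finrank ℂ V * finrank ℂ V - 1 := by
  have hn0 : (finrank ℂ V : ℂ) ≠ 0 := by
    simp only [ne_eq, Nat.cast_eq_zero]
    omega
  have hsurj : Function.Surjective (LinearMap.trace ℂ V) := by
    intro c
    refine ⟨(c / finrank ℂ V) • LinearMap.id, ?_⟩
    rw [map_smul, trace_id, smul_eq_mul, div_mul_cancel₀ _ hn0]
  have h := LinearMap.finrank_range_add_finrank_ker (LinearMap.trace ℂ V)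
  rw [LinearMap.range_eq_top.2 hsurj, finrank_top, Module.finrank_linearMap,
    Module.finrank_self] at h
  omega

lemma irrOn_span_id (ρ : Representation ℂ G V) (hdim : 2 ≤ finrank ℂ V) :
    (ρ.linHom ρ).IsIrreducibleOn (ℂ ∙ (LinearMap.id : V →ₗ[ℂ] V)) := by
  have hne : (ℂ ∙ (LinearMap.id : V →ₗ[ℂ] V)) ≠ ⊥ := by
    intro h
    exact id_ne_zero hdim (Submodule.span_singleton_eq_bot.1 h)
  refine ⟨hne, fun N hle _ => ?_⟩
  rcases eq_or_ne N ⊥ with h | h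
  · exact Or.inl h
  · right
    apply Submodule.eq_of_le_of_finrank_eq hle
    rw [finrank_span_singleton (id_ne_zero hdim)]
    have h1 : finrank ℂ N ≤ 1 :=
      le_trans (Submodule.finrank_mono hle)
        (le_of_eq (finrank_span_singleton (id_ne_zero hdim)))
    have h2 : finrank ℂ N ≠ 0 := fun h0 => h ((Submodule.finrank_eq_zero (R := ℂ) (S := N)).mp h0)
    omega

lemma adIrreducible_iff_finrank_two (ρ : Representation ℂ G V) (hdim : 2 ≤ finrank ℂ V) :
    ρ.AdIrreducible ↔
      finrank ℂ (((ρ.linHom ρ).linHom (ρ.linHom ρ)).invariants) = 2 := by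
  have hcompl := isCompl_spanId_kerTrace (V := V) hdim
  have hspan_ne : (ℂ ∙ (LinearMap.id : V →ₗ[ℂ] V)) ≠ ⊥ := by
    intro h
    exact id_ne_zero hdim (Submodule.span_singleton_eq_bot.1 h)
  have hker_ne : LinearMap.ker (LinearMap.trace ℂ V) ≠ ⊥ := by
    intro h
    have h1 := finrank_kerTrace (V := V) hdim
    rw [h, finrank_bot] at h1
    have h4 : 4 ≤ finrank ℂ V * finrank ℂ V := Nat.mul_le_mul hdim hdim
    omega
  have hd : finrank ℂ (ℂ ∙ (LinearMap.id : V →ₗ[ℂ] V)) ≠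
      finrank ℂ (LinearMap.ker (LinearMap.trace ℂ V)) := by
    rw [finrank_span_singleton (id_ne_zero hdim), finrank_kerTrace (V := V) hdim]
    have h4 : 4 ≤ finrank ℂ V * finrank ℂ V := Nat.mul_le_mul hdim hdim
    omega
  have hiff := irr_pair_iff_finrank_two (ρ.linHom ρ) (span_id_invariant ρ) (sl_invariant ρ)
    hcompl hspan_ne hker_ne hd
  constructor
  · intro h
    exact hiff.1 ⟨irrOn_span_id ρ hdim, h⟩
  · intro h
    exact ((hiff.2 h).2 : _)

end EndSide


section TensorSide

open Module LinearMap TensorProduct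

variable {G : Type*} [Group G] [Finite G] {V : Type*} [AddCommGroup V] [Module ℂ V]
  [FiniteDimensional ℂ V]

/-- The flip endomorphism of `V ⊗ V`. -/
noncomputable def flipMap (V : Type*) [AddCommGroup V] [Module ℂ V] :
    (V ⊗[ℂ] V) →ₗ[ℂ] (V ⊗[ℂ] V) :=
  (TensorProduct.comm ℂ V V).toLinearMap

lemma flip_tmul (x y : V) : flipMap V (x ⊗ₜ[ℂ] y) = y ⊗ₜ[ℂ] x := rfl

omit [Finite G] [FiniteDimensional ℂ V] in
lemma span_isInvariant {W : Type*} [AddCommGroup W] [Module ℂ W] (σ : Representation ℂ G W)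
    {S : Set W} (h : ∀ g : G, ∀ x ∈ S, σ g x ∈ Submodule.span ℂ S) :
    σ.IsInvariant (Submodule.span ℂ S) := by
  intro g v hv
  refine Submodule.span_induction (fun x hx => h g x hx) (by simp)
    (fun x y _ _ hx hy => by rw [map_add]; exact Submodule.add_mem _ hx hy)
    (fun a x _ hx => by rw [map_smul]; exact Submodule.smul_mem _ _ hx) hv

omit [Finite G] [FiniteDimensional ℂ V] in
lemma symSquare_invariant (ρ : Representation ℂ G V) :
    (ρ.tprod ρ).IsInvariant (symSquare V) := by
  apply span_isInvariant
  rintro g x ⟨v, w, rfl⟩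
  apply Submodule.subset_span
  refine ⟨ρ g v, ρ g w, ?_⟩
  rw [Representation.tprod_apply, map_add, TensorProduct.map_tmul, TensorProduct.map_tmul]

omit [Finite G] [FiniteDimensional ℂ V] in
lemma altSquare_invariant (ρ : Representation ℂ G V) :
    (ρ.tprod ρ).IsInvariant (altSquare V) := by
  apply span_isInvariant
  rintro g x ⟨v, w, rfl⟩
  apply Submodule.subset_span
  refine ⟨ρ g v, ρ g w, ?_⟩
  rw [Representation.tprod_apply, map_sub, TensorProduct.map_tmul, TensorProduct.map_tmul]

lemma add_flip_mem (x : V ⊗[ℂ] V) : x + flipMap V x ∈ symSquare V := by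
  have hx : x ∈ Submodule.span ℂ {t : V ⊗[ℂ] V | ∃ m n : V, m ⊗ₜ n = t} := by
    rw [TensorProduct.span_tmul_eq_top]; trivial
  refine Submodule.span_induction (p := fun t _ => t + flipMap V t ∈ symSquare V)
    ?_ (by simp) ?_ ?_ hx
  · rintro t ⟨v, w, rfl⟩
    exact Submodule.subset_span ⟨v, w, by rw [flip_tmul]⟩
  · intro a c _ _ ha hc
    have := Submodule.add_mem _ ha hc
    convert this using 1
    rw [map_add]
    abel
  · intro a t _ ht
    rw [map_smul, ← smul_add]
    exact Submodule.smul_mem _ _ ht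

lemma sub_flip_mem (x : V ⊗[ℂ] V) : x - flipMap V x ∈ altSquare V := by
  have hx : x ∈ Submodule.span ℂ {t : V ⊗[ℂ] V | ∃ m n : V, m ⊗ₜ n = t} := by
    rw [TensorProduct.span_tmul_eq_top]; trivial
  refine Submodule.span_induction (p := fun t _ => t - flipMap V t ∈ altSquare V)
    ?_ (by simp) ?_ ?_ hx
  · rintro t ⟨v, w, rfl⟩
    exact Submodule.subset_span ⟨v, w, by rw [flip_tmul]⟩
  · intro a c _ _ ha hc
    have := Submodule.add_mem _ ha hc
    convert this using 1
    rw [map_add]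
    abel
  · intro a t _ ht
    rw [map_smul, ← smul_sub]
    exact Submodule.smul_mem _ _ ht

lemma flip_eq_of_mem_sym : ∀ x ∈ symSquare V, flipMap V x = x := by
  intro x hx
  refine Submodule.span_induction (p := fun t _ => flipMap V t = t) ?_ (by simp) ?_ ?_ hx
  · rintro t ⟨v, w, rfl⟩
    rw [map_add, flip_tmul, flip_tmul, add_comm]
  · intro a c _ _ ha hc
    rw [map_add, ha, hc]
  · intro a t _ ht
    rw [map_smul, ht]

lemma flip_eq_neg_of_mem_alt : ∀ x ∈ altSquare V, flipMap V x = -x := by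
  intro x hx
  refine Submodule.span_induction (p := fun t _ => flipMap V t = -t) ?_ (by simp) ?_ ?_ hx
  · rintro t ⟨v, w, rfl⟩
    rw [map_sub, flip_tmul, flip_tmul, neg_sub]
  · intro a c _ _ ha hc
    rw [map_add, ha, hc, neg_add]
  · intro a t _ ht
    rw [map_smul, ht, smul_neg]

lemma isCompl_sym_alt : IsCompl (symSquare V) (altSquare V) := by
  constructor
  · rw [Submodule.disjoint_def]
    intro x hs ha
    have h1 := flip_eq_of_mem_sym x hs
    have h2 := flip_eq_neg_of_mem_alt x ha
    have hxx : x = -x := by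
      conv_lhs => rw [← h1, h2]
    have h2x : (2 : ℂ) • x = 0 := by
      rw [two_smul]
      nth_rw 1 [hxx]
      exact neg_add_cancel x
    rcases smul_eq_zero.1 h2x with h | h
    · exact absurd h two_ne_zero
    · exact h
  · rw [codisjoint_iff, eq_top_iff]
    intro x _
    have ha : (2 : ℂ)⁻¹ • (x + flipMap V x) ∈ symSquare V :=
      Submodule.smul_mem _ _ (add_flip_mem x)
    have hb : (2 : ℂ)⁻¹ • (x - flipMap V x) ∈ altSquare V :=
      Submodule.smul_mem _ _ (sub_flip_mem x)
    have hab : (2 : ℂ)⁻¹ • (x + flipMap V x) + (2 : ℂ)⁻¹ • (x - flipMap V x) = x := by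
      have h2 : (2 : ℂ) ≠ 0 := two_ne_zero
      match_scalars
      · field_simp; norm_num
      · ring
    rw [← hab]
    exact Submodule.add_mem_sup ha hb

lemma symSquare_ne_bot (hdim : 2 ≤ finrank ℂ V) : symSquare V ≠ ⊥ := by
  set b := Module.finBasis ℂ V with hb
  set i0 : Fin (finrank ℂ V) := ⟨0, by omega⟩ with hi0
  have hmem : b i0 ⊗ₜ[ℂ] b i0 + b i0 ⊗ₜ[ℂ] b i0 ∈ symSquare V :=
    Submodule.subset_span ⟨b i0, b i0, rfl⟩
  intro h
  rw [h, Submodule.mem_bot] at hmem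
  have := congrArg (fun z => ((b.tensorProduct b).repr z) (i0, i0)) hmem
  simp only [map_add, Basis.tensorProduct_repr_tmul_apply, Basis.repr_self,
    Finsupp.single_eq_same, smul_eq_mul, mul_one, map_zero, Finsupp.coe_zero,
    Pi.zero_apply] at this
  norm_num at this

lemma altSquare_ne_bot (hdim : 2 ≤ finrank ℂ V) : altSquare V ≠ ⊥ := by
  set b := Module.finBasis ℂ V with hb
  set i0 : Fin (finrank ℂ V) := ⟨0, by omega⟩ with hi0
  set i1 : Fin (finrank ℂ V) := ⟨1, by omega⟩ with hi1
  have hne : i0 ≠ i1 := by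
    rw [hi0, hi1]
    simp [Fin.ext_iff]
  have hmem : b i0 ⊗ₜ[ℂ] b i1 - b i1 ⊗ₜ[ℂ] b i0 ∈ altSquare V :=
    Submodule.subset_span ⟨b i0, b i1, rfl⟩
  intro h
  rw [h, Submodule.mem_bot] at hmem
  have := congrArg (fun z => ((b.tensorProduct b).repr z) (i0, i1)) hmem
  simp only [map_sub, Finsupp.coe_sub, Pi.sub_apply, Basis.tensorProduct_repr_tmul_apply,
    Basis.repr_self, Finsupp.single_eq_same, smul_eq_mul, map_zero, Finsupp.coe_zero,
    Pi.zero_apply] at this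
  rw [Finsupp.single_eq_of_ne hne, Finsupp.single_eq_of_ne (Ne.symm hne)] at this
  norm_num at this

lemma trace_flip : trace ℂ (V ⊗[ℂ] V) (flipMap V) = (finrank ℂ V : ℂ) := by
  set b := Module.finBasis ℂ V with hb
  set B := b.tensorProduct b with hB
  rw [trace_eq_matrix_trace ℂ B]
  have hdiag : ∀ p : Fin (finrank ℂ V) × Fin (finrank ℂ V),
      (LinearMap.toMatrix B B (flipMap V)) p p = if p.1 = p.2 then 1 else 0 := by
    rintro ⟨i, j⟩
    rw [LinearMap.toMatrix_apply, hB, Basis.tensorProduct_apply', flip_tmul,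
      Basis.tensorProduct_repr_tmul_apply, Basis.repr_self, Basis.repr_self,
      Finsupp.single_apply, Finsupp.single_apply]
    by_cases h : i = j
    · subst h; simp
    · simp [h, Ne.symm h]
  rw [Matrix.trace]
  simp only [Matrix.diag_apply]
  rw [Finset.sum_congr rfl (fun p _ => hdiag p), Fintype.sum_prod_type]
  simp [Finset.sum_ite_eq]

lemma finrank_sym_ne_alt (hdim : 2 ≤ finrank ℂ V) :
    finrank ℂ (symSquare V) ≠ finrank ℂ (altSquare V) := by
  set T := flipMap V with hT
  have hP1 : IsProj (symSquare V) ((2 : ℂ)⁻¹ • (LinearMap.id + T)) := by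
    constructor
    · intro x
      simp only [LinearMap.smul_apply, LinearMap.add_apply, LinearMap.id_apply]
      exact Submodule.smul_mem _ _ (add_flip_mem x)
    · intro x hx
      simp only [LinearMap.smul_apply, LinearMap.add_apply, LinearMap.id_apply]
      rw [hT, flip_eq_of_mem_sym x hx, ← two_smul ℂ, smul_smul,
        inv_mul_cancel₀ (two_ne_zero), one_smul]
  have hP2 : IsProj (altSquare V) ((2 : ℂ)⁻¹ • (LinearMap.id - T)) := by
    constructor
    · intro x
      simp only [LinearMap.smul_apply, LinearMap.sub_apply, LinearMap.id_apply]
      exact Submodule.smul_mem _ _ (sub_flip_mem x)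
    · intro x hx
      simp only [LinearMap.smul_apply, LinearMap.sub_apply, LinearMap.id_apply]
      rw [hT, flip_eq_neg_of_mem_alt x hx, sub_neg_eq_add, ← two_smul ℂ, smul_smul,
        inv_mul_cancel₀ (two_ne_zero), one_smul]
  intro heq
  have hcast : (finrank ℂ (symSquare V) : ℂ) = (finrank ℂ (altSquare V) : ℂ) := by
    exact_mod_cast congrArg (Nat.cast : ℕ → ℂ) heq
  have hdiff : trace ℂ (V ⊗[ℂ] V) ((2 : ℂ)⁻¹ • (LinearMap.id + T)) -
      trace ℂ (V ⊗[ℂ] V) ((2 : ℂ)⁻¹ • (LinearMap.id - T)) = 0 := by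
    rw [hP1.trace, hP2.trace, hcast, sub_self]
  rw [← map_sub] at hdiff
  have hTdiff : ((2 : ℂ)⁻¹ • (LinearMap.id + T)) - ((2 : ℂ)⁻¹ • (LinearMap.id - T)) = T := by
    match_scalars
    · ring
    · field_simp; norm_num
  rw [hTdiff, hT, trace_flip] at hdiff
  have : finrank ℂ V = 0 := by exact_mod_cast hdiff
  omega

end TensorSide

/-- Let `G` be a finite group and `ρ` an irreducible finite-dimensional
complex representation of `G` (of dimension at least 2). Then `Ad ρ` is irreducible iff
both the symmetric square `Sym² ρ` and the alternating square `Λ² ρ` are irreducible. -/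
theorem adIrreducible_iff_symSquare_irreducible_and_altSquare_irreducible
    {G : Type*} [Group G] [Finite G] {V : Type*} [AddCommGroup V] [Module ℂ V]
    [FiniteDimensional ℂ V] (hdim : 2 ≤ Module.finrank ℂ V)
    (ρ : Representation ℂ G V) (hirr : ρ.IsIrreducible') :
    ρ.AdIrreducible ↔
      (ρ.tprod ρ).IsIrreducibleOn (symSquare V) ∧
      (ρ.tprod ρ).IsIrreducibleOn (altSquare V) := by
  rw [adIrreducible_iff_finrank_two ρ hdim, ← key_finrank_eq ρ]
  exact (irr_pair_iff_finrank_two (ρ.tprod ρ) (symSquare_invariant ρ) (altSquare_invariant ρ)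
    isCompl_sym_alt (symSquare_ne_bot hdim) (altSquare_ne_bot hdim)
    (finrank_sym_ne_alt hdim)).symm
end

section
/- Let G be a finite group and (ρ, V) an irreducible complex representation of dimension n ≥ 3. If ρ is essentially self-dual, i.e., ρ^∨ ≅ ρ ⊗ χ for some one-dimensional character χ of G, then Ad(ρ) is reducible. -/
open Module LinearMap

variable {G : Type*} [Group G] {V : Type*} [AddCommGroup V] [Module ℂ V]

/- ---------- auxiliary lemmas ---------- -/

lemma schur_aux [FiniteDimensional ℂ V] (ρ : Representation ℂ G V)
    (hirr : ρ.IsIrreducible') (f : V →ₗ[ℂ] V)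
    (hf : ∀ (g : G) v, f (ρ g v) = ρ g (f v)) : ∃ c : ℂ, ∀ v, f v = c • v := by
  haveI : Nontrivial V := hirr.1
  obtain ⟨c, hc⟩ := Module.End.exists_eigenvalue (f : Module.End ℂ V)
  obtain ⟨v₀, hv₀⟩ := hc.exists_hasEigenvector
  refine ⟨c, ?_⟩
  have hmem : ∀ v : V, v ∈ LinearMap.ker (f - c • LinearMap.id) ↔ f v = c • v := by
    intro v
    simp [LinearMap.mem_ker, sub_eq_zero]
  have hUinv : ρ.IsInvariant (LinearMap.ker (f - c • LinearMap.id)) := by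
    intro g v hv
    rw [hmem] at hv ⊢
    rw [hf, hv, map_smul]
  rcases hirr.2 _ hUinv with h | h
  · exfalso
    have : v₀ ∈ LinearMap.ker (f - c • LinearMap.id) := by
      rw [hmem]; exact hv₀.apply_eq_smul
    rw [h, Submodule.mem_bot] at this
    exact hv₀.right this
  · intro v
    have : v ∈ LinearMap.ker (f - c • LinearMap.id) := h ▸ Submodule.mem_top
    rwa [hmem] at this

lemma trace_smulRight_aux [FiniteDimensional ℂ V] (φ : Module.Dual ℂ V) (b : V) :
    LinearMap.trace ℂ V (φ.smulRight b) = φ b := by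
  have h1 : φ.smulRight b = dualTensorHom ℂ V V (φ ⊗ₜ[ℂ] b) := by
    ext x; simp [dualTensorHom_apply]
  rw [h1]
  have := LinearMap.ext_iff.mp (LinearMap.trace_eq_contract ℂ V) (φ ⊗ₜ[ℂ] b)
  simpa using this

/-- Let `G` be a finite group and `ρ` an irreducible complex representation
of dimension `n ≥ 3`. If `ρ` is essentially self-dual, i.e. `ρ^∨ ≅ ρ ⊗ χ` for some
one-dimensional character `χ` of `G`, then `Ad ρ` is reducible. -/
theorem adRep_reducible_of_essentially_self_dual
    {G : Type*} [Group G] [Finite G] {V : Type*} [AddCommGroup V] [Module ℂ V]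
    [FiniteDimensional ℂ V] (hdim : 3 ≤ Module.finrank ℂ V)
    (ρ : Representation ℂ G V) (hirr : ρ.IsIrreducible')
    (hesd : ∃ (χ : G →* ℂˣ) (e : V ≃ₗ[ℂ] Module.Dual ℂ V),
      ∀ g v, e ((χ g : ℂ) • ρ g v) = ρ.dual g (e v)) :
    ¬ ρ.AdIrreducible := by
  obtain ⟨χ, e, he⟩ := hesd
  haveI : Nontrivial V := hirr.1
  -- basic intertwining relation
  have L1 : ∀ (g : G) (x y : V), (χ g : ℂ) * e (ρ g x) y = e x (ρ g⁻¹ y) := by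
    intro g x y
    have := congrFun (congrArg (fun φ : Module.Dual ℂ V => (φ : V → ℂ)) (he g x)) y
    simpa [Representation.dual, LinearMap.smul_apply] using this
  have L1' : ∀ (g : G) (x y : V), e (ρ g x) y = (χ g : ℂ)⁻¹ * e x (ρ g⁻¹ y) := by
    intro g x y
    rw [← L1 g x y]
    rw [← mul_assoc, inv_mul_cancel₀ (Units.ne_zero (χ g)), one_mul]
  have L1'' : ∀ (g : G) (x y : V), e (ρ g⁻¹ x) y = (χ g : ℂ) * e x (ρ g y) := by
    intro g x y
    have h := L1' g⁻¹ x y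
    rw [h]
    simp [inv_inv]
  -- Schur constant for the flip
  obtain ⟨c, hc⟩ : ∃ c : ℂ, ∀ x y : V, e y x = c * e x y := by
    set φ : V →ₗ[ℂ] V := e.symm.toLinearMap ∘ₗ (LinearMap.flip e.toLinearMap) with hφdef
    have hφ : ∀ x y : V, e (φ x) y = e y x := by
      intro x y
      simp only [hφdef, LinearMap.comp_apply, LinearEquiv.coe_coe,
        LinearEquiv.apply_symm_apply]
      rfl
    have hcomm : ∀ (g : G) (v : V), φ (ρ g v) = ρ g (φ v) := by
      intro g v
      apply e.injective
      apply LinearMap.ext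
      intro y
      rw [hφ, L1' g (φ v) y, hφ, L1'' g y v, ← mul_assoc,
        inv_mul_cancel₀ (Units.ne_zero (χ g)), one_mul]
    obtain ⟨c, hcv⟩ := schur_aux ρ hirr φ hcomm
    exact ⟨c, fun x y => by rw [← hφ x y, hcv x, map_smul, LinearMap.smul_apply, smul_eq_mul]⟩
  have hc2 : c * c = 1 := by
    obtain ⟨v, hv⟩ := exists_ne (0 : V)
    obtain ⟨w, hw⟩ : ∃ w, e v w ≠ 0 := by
      by_contra h
      push_neg at h
      exact hv (e.map_eq_zero_iff.mp (LinearMap.ext h))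
    have h1 : e v w = c * (c * e v w) := by
      conv_lhs => rw [hc w v, hc v w]
    have h2 : (c * c - 1) * e v w = 0 := by linear_combination -h1
    rcases mul_eq_zero.mp h2 with h | h
    · exact sub_eq_zero.mp h
    · exact absurd h hw
  -- injectivity helper
  have hinj : ∀ (p q : V →ₗ[ℂ] V), (∀ x y, e (p x) y = e (q x) y) → p = q := by
    intro p q h
    ext x
    exact e.injective (LinearMap.ext (h x))
  -- the adjoint map θ
  obtain ⟨θ, hθ⟩ : ∃ θ : (V →ₗ[ℂ] V) →ₗ[ℂ] (V →ₗ[ℂ] V),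
      ∀ (f : V →ₗ[ℂ] V) (x y : V), e (θ f x) y = e x (f y) := by
    set t : (V →ₗ[ℂ] V) → (V →ₗ[ℂ] V) :=
      fun f => e.symm.toLinearMap ∘ₗ (f.dualMap ∘ₗ e.toLinearMap) with ht
    have K : ∀ f x y, e (t f x) y = e x (f y) := by
      intro f x y
      simp only [ht, LinearMap.comp_apply, LinearEquiv.coe_coe,
        LinearEquiv.apply_symm_apply, LinearMap.dualMap_apply]
    refine ⟨⟨⟨t, ?_⟩, ?_⟩, K⟩
    · intro f g
      exact hinj _ _ (fun x y => by
        simp only [K, LinearMap.add_apply, map_add, K])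
    · intro m f
      exact hinj _ _ (fun x y => by
        simp only [K, RingHom.id_apply, LinearMap.smul_apply, map_smul, smul_eq_mul, K])
  -- θ is equivariant
  have hequiv : ∀ (g : G) (f : V →ₗ[ℂ] V), θ (ρ.linHom ρ g f) = ρ.linHom ρ g (θ f) := by
    intro g f
    apply hinj
    intro x y
    rw [hθ, Representation.linHom_apply, Representation.linHom_apply]
    simp only [LinearMap.comp_apply]
    rw [L1' g _ y, hθ, L1'' g x _, ← mul_assoc,
      inv_mul_cancel₀ (Units.ne_zero (χ g)), one_mul]
  -- rank-one building blocks
  set T : V → V → (V →ₗ[ℂ] V) := fun a b => (e a).smulRight b with hT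
  have hTapp : ∀ a b x, T a b x = e a x • b := fun a b x => rfl
  have hTtr : ∀ a b, LinearMap.trace ℂ V (T a b) = e a b :=
    fun a b => trace_smulRight_aux (e a) b
  have hθT : ∀ a b, θ (T a b) = c • T b a := by
    intro a b
    apply hinj
    intro x y
    rw [hθ]
    simp only [hTapp, LinearMap.smul_apply, map_smul, smul_eq_mul]
    rw [hc b x]
    ring
  have hθid : θ LinearMap.id = LinearMap.id := by
    apply hinj
    intro x y
    rw [hθ]
    simp
  -- basis vectors
  set B := Module.finBasis ℂ V with hB
  have h0 : 0 < finrank ℂ V := by omega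
  have h1 : 1 < finrank ℂ V := by omega
  have h2 : 2 < finrank ℂ V := by omega
  set i0 : Fin (finrank ℂ V) := ⟨0, h0⟩
  set i1 : Fin (finrank ℂ V) := ⟨1, h1⟩
  set i2 : Fin (finrank ℂ V) := ⟨2, h2⟩
  set a := B i0 with ha
  set b := B i1 with hb
  set x₀ := B i2 with hx₀def
  have hab : b ∉ Submodule.span ℂ {a} := by
    have := B.linearIndependent.notMem_span_image (s := {i0}) (x := i1)
      (by simp [i0, i1, Fin.ext_iff])
    simpa [Set.image_singleton] using this
  have hx₀ : x₀ ∉ Submodule.span ℂ ({a, b} : Set V) := by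
    have := B.linearIndependent.notMem_span_image (s := {i0, i1}) (x := i2)
      (by simp [i0, i1, i2, Fin.ext_iff])
    simpa [Set.image_insert_eq, Set.image_singleton] using this
  -- key non-proportionality
  have hkey : ∀ d : ℂ, T a b ≠ d • T b a := by
    intro d h
    have ha0 : a ≠ 0 := B.ne_zero i0
    obtain ⟨x, hx⟩ : ∃ x, e a x ≠ 0 := by
      by_contra hcon
      push_neg at hcon
      exact ha0 (e.map_eq_zero_iff.mp (LinearMap.ext hcon))
    have hx' := LinearMap.congr_fun h x
    rw [hTapp, LinearMap.smul_apply, hTapp, smul_smul] at hx'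
    apply hab
    have : b = ((e a x)⁻¹ * (d * e b x)) • a := by
      rw [mul_smul, ← hx', smul_smul, inv_mul_cancel₀ hx, one_smul]
    exact this ▸ Submodule.smul_mem _ _ (Submodule.mem_span_singleton_self a)
  -- antisymmetric element A
  set A := T a b - c • T b a with hA
  have hθA : θ A = -A := by
    rw [hA, map_sub, map_smul, hθT, hθT, smul_smul, hc2, one_smul, neg_sub]
  have hAtr : LinearMap.trace ℂ V A = 0 := by
    rw [hA, map_sub, map_smul, hTtr, hTtr, smul_eq_mul, hc b a, sub_self]
  have hA0 : A ≠ 0 := by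
    intro h
    exact hkey c (sub_eq_zero.mp (hA ▸ h))
  -- symmetric element S
  have hn : (finrank ℂ V : ℂ) ≠ 0 := by
    simp only [ne_eq, Nat.cast_eq_zero]
    omega
  set μ : ℂ := 2 * e a b / (finrank ℂ V : ℂ) with hμ
  set S := T a b + c • T b a - μ • LinearMap.id with hS
  have hθS : θ S = S := by
    rw [hS, map_sub, map_add, map_smul, map_smul, hθT, hθT, hθid, smul_smul, hc2, one_smul]
    abel
  have hStr : LinearMap.trace ℂ V S = 0 := by
    rw [hS, map_sub, map_add, map_smul, map_smul, hTtr, hTtr, LinearMap.trace_id,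
      smul_eq_mul, smul_eq_mul, hμ]
    rw [show c * e b a = e a b from (hc b a).symm]
    field_simp
    ring
  have hS0 : S ≠ 0 := by
    intro h
    have heq : T a b + c • T b a = μ • LinearMap.id := sub_eq_zero.mp (hS ▸ h)
    by_cases hμ0 : μ = 0
    · rw [hμ0, zero_smul] at heq
      have : T a b = (-c) • T b a := by
        rw [neg_smul, ← sub_eq_zero]
        rw [sub_neg_eq_add]
        exact heq
      exact hkey (-c) this
    · apply hx₀
      have hx' := LinearMap.congr_fun heq x₀
      rw [LinearMap.add_apply, LinearMap.smul_apply, hTapp, hTapp, smul_smul,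
        LinearMap.smul_apply, LinearMap.id_apply] at hx'
      have hmem : μ • x₀ ∈ Submodule.span ℂ ({a, b} : Set V) := by
        rw [← hx']
        refine Submodule.add_mem _ ?_ ?_
        · exact Submodule.smul_mem _ _ (Submodule.subset_span (by simp))
        · exact Submodule.smul_mem _ _ (Submodule.subset_span (by simp))
      have : x₀ = μ⁻¹ • (μ • x₀) := by rw [smul_smul, inv_mul_cancel₀ hμ0, one_smul]
      exact this ▸ Submodule.smul_mem _ _ hmem
  -- the invariant subspace
  set U : Submodule ℂ (V →ₗ[ℂ] V) :=
    LinearMap.ker (θ + LinearMap.id) ⊓ LinearMap.ker (LinearMap.trace ℂ V) with hU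
  have hUle : U ≤ LinearMap.ker (LinearMap.trace ℂ V) := inf_le_right
  have hUinv : (ρ.linHom ρ).IsInvariant U := by
    intro g f hf
    obtain ⟨hf1, hf2⟩ := Submodule.mem_inf.mp hf
    refine Submodule.mem_inf.mpr ⟨?_, sl_invariant ρ g f hf2⟩
    rw [LinearMap.mem_ker, LinearMap.add_apply, LinearMap.id_apply] at hf1 ⊢
    rw [hequiv, ← map_add (ρ.linHom ρ g), hf1, map_zero]
  have hAU : A ∈ U := by
    refine Submodule.mem_inf.mpr ⟨?_, LinearMap.mem_ker.mpr hAtr⟩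
    rw [LinearMap.mem_ker, LinearMap.add_apply, LinearMap.id_apply, hθA, neg_add_cancel]
  -- conclusion
  intro hAd
  rcases hAd.2 U hUle hUinv with h | h
  · rw [h, Submodule.mem_bot] at hAU
    exact hA0 hAU
  · have hSU : S ∈ U := by rw [h]; exact LinearMap.mem_ker.mpr hStr
    obtain ⟨hS1, _⟩ := Submodule.mem_inf.mp hSU
    rw [LinearMap.mem_ker, LinearMap.add_apply, LinearMap.id_apply, hθS] at hS1
    apply hS0
    have : (2 : ℂ) • S = 0 := by rw [two_smul]; exact hS1
    simpa [smul_eq_zero] using this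
end

section
/- Let G be a finite group, H a proper subgroup, and τ a finite-dimensional complex representation of H. If ρ = Ind_H^G(τ) is irreducible, then Ad(ρ) is reducible. Equivalently, if Ad(ρ) is irreducible then ρ is a primitive representation. -/
open Module LinearMap

variable {G : Type*} [Group G] {V : Type*} [AddCommGroup V] [Module ℂ V]

/-- Irreducibility of a representation. -/
def Representation.IsIrreducibleRep (ρ : Representation ℂ G V) : Prop :=
  Nontrivial V ∧ ∀ U : Submodule ℂ V, ρ.IsInvariant U → U = ⊥ ∨ U = ⊤

section Induction

variable {G : Type*} [Group G] {W : Type*} [AddCommGroup W] [Module ℂ W]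

/-- The right-regular action of `G` on `W`-valued functions on `G`. -/
def rightRegular (G : Type*) [Group G] (W : Type*) [AddCommGroup W] [Module ℂ W] :
    Representation ℂ G (G → W) where
  toFun g := LinearMap.funLeft ℂ W (fun x => x * g)
  map_one' := by ext f x; simp [LinearMap.funLeft]
  map_mul' g₁ g₂ := by ext f x; simp [LinearMap.funLeft, mul_assoc]

/-- The space of the representation of `G` induced from a representation `τ` of a
subgroup `H`: functions `f : G → W` with `f (h * g) = τ h (f g)`. -/
def indSubmodule (H : Subgroup G) (τ : Representation ℂ H W) : Submodule ℂ (G → W) where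
  carrier := {f | ∀ (h : H) (g : G), f (↑h * g) = τ h (f g)}
  add_mem' := by intro a b ha hb h g; simp [ha h g, hb h g]
  zero_mem' := by intro h g; simp
  smul_mem' := by intro c f hf h g; simp [hf h g]

lemma indSubmodule_invariant (H : Subgroup G) (τ : Representation ℂ H W) :
    (rightRegular G W).IsInvariant (indSubmodule H τ) := by
  intro g₀ f hf h g
  have h1 := hf h (g * g₀)
  simpa [rightRegular, LinearMap.funLeft, mul_assoc] using h1

/-- The representation of `G` induced from a representation `τ` of a subgroup `H`. -/
def indRep (H : Subgroup G) (τ : Representation ℂ H W) :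
    Representation ℂ G (indSubmodule H τ) :=
  (rightRegular G W).subRep _ (indSubmodule_invariant H τ)

end Induction

set_option synthInstance.maxHeartbeats 1000000
set_option maxHeartbeats 1000000

section Aux

variable {G : Type*} [Group G] {W : Type*} [AddCommGroup W] [Module ℂ W]

open Classical in
/-- Multiplication by the indicator function of the right coset `H * g`. -/
noncomputable def Pfull (H : Subgroup G) (g : G) : (G → W) →ₗ[ℂ] (G → W) where
  toFun f := fun x => if x * g⁻¹ ∈ H then f x else 0
  map_add' f₁ f₂ := by ext x; by_cases h : x * g⁻¹ ∈ H <;> simp [h]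
  map_smul' c f := by ext x; by_cases h : x * g⁻¹ ∈ H <;> simp [h]

open Classical in
lemma Pfull_apply (H : Subgroup G) (g : G) (f : G → W) (x : G) :
    Pfull H g f x = if x * g⁻¹ ∈ H then f x else 0 := rfl

lemma Pfull_mem (H : Subgroup G) (τ : Representation ℂ H W) (g : G)
    {f : G → W} (hf : f ∈ indSubmodule H τ) : Pfull H g f ∈ indSubmodule H τ := by
  intro h x
  have hcond : (↑h * x) * g⁻¹ ∈ H ↔ x * g⁻¹ ∈ H := by
    rw [mul_assoc]; exact H.mul_mem_cancel_left h.2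
  rw [Pfull_apply, Pfull_apply]
  by_cases hx : x * g⁻¹ ∈ H
  · rw [if_pos (hcond.2 hx), if_pos hx, hf h x]
  · rw [if_neg (fun hc => hx (hcond.1 hc)), if_neg hx, map_zero]

/-- The coset projections on the induced representation space. -/
noncomputable def Pc (H : Subgroup G) (τ : Representation ℂ H W) (g : G) :
    indSubmodule H τ →ₗ[ℂ] indSubmodule H τ :=
  (Pfull H g).restrict (fun _ hf => Pfull_mem H τ g hf)

lemma Pc_coe (H : Subgroup G) (τ : Representation ℂ H W) (g : G)
    (f : indSubmodule H τ) (x : G) :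
    (Pc H τ g f : G → W) x = Pfull H g (f : G → W) x := rfl

lemma indRep_coe (H : Subgroup G) (τ : Representation ℂ H W) (g : G)
    (f : indSubmodule H τ) (x : G) :
    ((indRep H τ g f : indSubmodule H τ) : G → W) x = (f : G → W) (x * g) := rfl

lemma Pc_comm (H : Subgroup G) (τ : Representation ℂ H W) (g g' : G) :
    Pc H τ g * Pc H τ g' = Pc H τ g' * Pc H τ g := by
  ext f x
  show (Pc H τ g (Pc H τ g' f) : G → W) x = (Pc H τ g' (Pc H τ g f) : G → W) x
  simp only [Pc_coe, Pfull_apply]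
  split_ifs <;> rfl

lemma Pc_idem (H : Subgroup G) (τ : Representation ℂ H W) (g : G) :
    Pc H τ g * Pc H τ g = Pc H τ g := by
  ext f x
  show (Pc H τ g (Pc H τ g f) : G → W) x = (Pc H τ g f : G → W) x
  simp only [Pc_coe, Pfull_apply]
  split_ifs <;> rfl

lemma Pc_disjoint (H : Subgroup G) (τ : Representation ℂ H W) {g g' : G}
    (hgg' : g * g'⁻¹ ∉ H) : Pc H τ g * Pc H τ g' = 0 := by
  ext f x
  show (Pc H τ g (Pc H τ g' f) : G → W) x = 0
  simp only [Pc_coe, Pfull_apply]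
  split_ifs with h1 h2
  · exfalso
    apply hgg'
    have h3 : (x * g⁻¹)⁻¹ * (x * g'⁻¹) ∈ H := H.mul_mem (H.inv_mem h1) h2
    have h4 : (x * g⁻¹)⁻¹ * (x * g'⁻¹) = g * g'⁻¹ := by group
    rwa [h4] at h3
  · rfl
  · rfl

lemma ad_Pc (H : Subgroup G) (τ : Representation ℂ H W) (g₀ g : G) :
    ((indRep H τ).linHom (indRep H τ)) g₀ (Pc H τ g) = Pc H τ (g * g₀⁻¹) := by
  rw [Representation.linHom_apply]
  ext f x
  show ((indRep H τ g₀ (Pc H τ g (indRep H τ g₀⁻¹ f)) : indSubmodule H τ) : G → W) x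
      = (Pc H τ (g * g₀⁻¹) f : G → W) x
  rw [indRep_coe, Pc_coe, Pfull_apply, Pc_coe, Pfull_apply]
  have hcond : x * g₀ * g⁻¹ ∈ H ↔ x * (g * g₀⁻¹)⁻¹ ∈ H := by
    rw [mul_inv_rev, inv_inv, ← mul_assoc]
  by_cases h : x * g₀ * g⁻¹ ∈ H
  · rw [if_pos h, if_pos (hcond.1 h), indRep_coe]
    simp [mul_assoc]
  · rw [if_neg h, if_neg (fun hc => h (hcond.2 hc))]

lemma trace_ad {V : Type*} [AddCommGroup V] [Module ℂ V] [FiniteDimensional ℂ V]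
    (ρ : Representation ℂ G V) (g : G) (A : V →ₗ[ℂ] V) :
    LinearMap.trace ℂ V ((ρ.linHom ρ) g A) = LinearMap.trace ℂ V A := by
  rw [Representation.linHom_apply, ← Module.End.mul_eq_comp, ← Module.End.mul_eq_comp,
    LinearMap.trace_mul_comm, mul_assoc, ← map_mul, inv_mul_cancel, map_one, mul_one]

open Classical in
/-- A function in the induced space supported on `H`, with value `w` at `1`. -/
noncomputable def fSupp (H : Subgroup G) (τ : Representation ℂ H W) (w : W) : G → W :=
  fun x => if hx : x ∈ H then τ ⟨x, hx⟩ w else 0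

lemma fSupp_mem (H : Subgroup G) (τ : Representation ℂ H W) (w : W) :
    fSupp H τ w ∈ indSubmodule H τ := by
  intro h g
  by_cases hg : g ∈ H
  · have hhg : (↑h * g : G) ∈ H := H.mul_mem h.2 hg
    rw [fSupp, dif_pos hhg, fSupp, dif_pos hg]
    have : (⟨↑h * g, hhg⟩ : H) = h * ⟨g, hg⟩ := rfl
    rw [this, map_mul]
    rfl
  · have hhg : (↑h * g : G) ∉ H := by
      intro hc
      exact hg (by simpa using H.mul_mem (H.inv_mem h.2) hc)
    rw [fSupp, dif_neg hhg, fSupp, dif_neg hg, map_zero]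

lemma fSupp_one (H : Subgroup G) (τ : Representation ℂ H W) (w : W) :
    fSupp H τ w 1 = w := by
  rw [fSupp, dif_pos H.one_mem]
  have : (⟨(1 : G), H.one_mem⟩ : H) = 1 := rfl
  rw [this, map_one]
  rfl

lemma fSupp_not_mem (H : Subgroup G) (τ : Representation ℂ H W) (w : W) {x : G}
    (hx : x ∉ H) : fSupp H τ w x = 0 := by
  rw [fSupp, dif_neg hx]

end Aux

/-- Let `G` be a finite group, `H` a proper subgroup and `τ` a
finite-dimensional complex representation of `H`. If the induced representation
`ρ = Ind_H^G τ` is irreducible, then `Ad ρ` is reducible. (Equivalently: a representation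
with irreducible adjoint is primitive, i.e. not induced from any proper subgroup.) -/
theorem adRep_of_induced_reducible
    {G : Type*} [Group G] [Finite G] {W : Type*} [AddCommGroup W] [Module ℂ W]
    [FiniteDimensional ℂ W] (H : Subgroup G) (hH : H ≠ ⊤)
    (τ : Representation ℂ H W) (hirr : (indRep H τ).IsIrreducibleRep) :
    ¬ (indRep H τ).AdIrreducible := by
  classical
  rintro ⟨-, hmin⟩
  -- a group element outside H
  obtain ⟨g₁, hg₁⟩ : ∃ g, g ∉ H := by
    by_contra hc
    push_neg at hc
    exact hH ((Subgroup.eq_top_iff' H).2 hc)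
  -- a nonzero vector w of W
  haveI : Nontrivial (indSubmodule H τ) := hirr.1
  obtain ⟨f, hf0⟩ := exists_ne (0 : indSubmodule H τ)
  have : (f : G → W) ≠ 0 := fun hc => hf0 (Subtype.ext hc)
  obtain ⟨x₀, hx₀⟩ := Function.ne_iff.1 this
  set w : W := (f : G → W) x₀ with hw
  -- the function supported on H with value w at 1
  set f₀ : indSubmodule H τ := ⟨fSupp H τ w, fSupp_mem H τ w⟩ with hf₀
  -- the invariant subspace
  set U' : Submodule ℂ ((indSubmodule H τ) →ₗ[ℂ] (indSubmodule H τ)) :=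
    Submodule.span ℂ (Set.range (Pc H τ)) ⊓ LinearMap.ker (LinearMap.trace ℂ (indSubmodule H τ))
    with hU'
  have hle : U' ≤ LinearMap.ker (LinearMap.trace ℂ (indSubmodule H τ)) := inf_le_right
  have hinv : @Representation.IsInvariant G _ ((indSubmodule H τ) →ₗ[ℂ] (indSubmodule H τ)) _ _
      ((indRep H τ).linHom (indRep H τ)) U' := by
    intro g A hA
    rw [hU', Submodule.mem_inf] at hA ⊢
    refine ⟨?_, sl_invariant _ g A hA.2⟩
    have hspan : A ∈ Submodule.span ℂ (Set.range (Pc H τ)) := hA.1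
    refine Submodule.span_induction (p := fun B _ =>
      ((indRep H τ).linHom (indRep H τ)) g B ∈ Submodule.span ℂ (Set.range (Pc H τ)))
      ?_ ?_ ?_ ?_ hspan
    · rintro B ⟨g', rfl⟩
      show ((indRep H τ).linHom (indRep H τ)) g (Pc H τ g') ∈
        Submodule.span ℂ (Set.range (Pc H τ))
      rw [ad_Pc]
      exact Submodule.subset_span ⟨g' * g⁻¹, rfl⟩
    · show ((indRep H τ).linHom (indRep H τ)) g 0 ∈ Submodule.span ℂ (Set.range (Pc H τ))
      rw [map_zero]
      exact Submodule.zero_mem _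
    · intro B C _ _ hB hC
      show ((indRep H τ).linHom (indRep H τ)) g (B + C) ∈
        Submodule.span ℂ (Set.range (Pc H τ))
      rw [map_add]
      exact Submodule.add_mem _ hB hC
    · intro c B _ hB
      show ((indRep H τ).linHom (indRep H τ)) g (c • B) ∈
        Submodule.span ℂ (Set.range (Pc H τ))
      rw [map_smul]
      exact Submodule.smul_mem _ c hB
  rcases hmin U' hle hinv with hbot | htop
  · -- U' = ⊥ is impossible: Pc 1 - Pc g₁ is a nonzero element of U'
    have hmem : Pc H τ 1 - Pc H τ g₁ ∈ U' := by
      rw [hU', Submodule.mem_inf]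
      constructor
      · show Pc H τ 1 - Pc H τ g₁ ∈ Submodule.span ℂ (Set.range (Pc H τ))
        have hm1 : Pc H τ 1 ∈ Submodule.span ℂ (Set.range (Pc H τ)) :=
          Submodule.subset_span ⟨1, rfl⟩
        have hm2 : Pc H τ g₁ ∈ Submodule.span ℂ (Set.range (Pc H τ)) :=
          Submodule.subset_span ⟨g₁, rfl⟩
        have hrw : Pc H τ 1 - Pc H τ g₁ = Pc H τ 1 + (-1 : ℂ) • Pc H τ g₁ := by
          module
        rw [hrw]
        exact Submodule.add_mem _ hm1 (Submodule.smul_mem _ _ hm2)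
      · show Pc H τ 1 - Pc H τ g₁ ∈ LinearMap.ker (LinearMap.trace ℂ (indSubmodule H τ))
        rw [LinearMap.mem_ker]
        have h1 : ((indRep H τ).linHom (indRep H τ)) g₁⁻¹ (Pc H τ 1) = Pc H τ g₁ := by
          rw [ad_Pc, one_mul, inv_inv]
        have h2 := trace_ad (indRep H τ) g₁⁻¹ (Pc H τ 1)
        rw [h1] at h2
        have hrw2 : Pc H τ 1 - Pc H τ g₁ = Pc H τ 1 + (-1 : ℂ) • Pc H τ g₁ := by module
        rw [hrw2, map_add, map_smul, h2]
        simp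
    rw [hbot, Submodule.mem_bot] at hmem
    have heq : Pc H τ 1 = Pc H τ g₁ := sub_eq_zero.mp hmem
    have h1 : (Pc H τ 1 f₀ : G → W) 1 = w := by
      rw [Pc_coe, Pfull_apply, if_pos (by simpa using H.one_mem)]
      exact fSupp_one H τ w
    have h2 : (Pc H τ g₁ f₀ : G → W) 1 = 0 := by
      rw [Pc_coe, Pfull_apply, if_neg]
      rw [one_mul, H.inv_mem_iff]
      exact hg₁
    rw [heq, h2] at h1
    exact hx₀ (by simpa [hw] using h1.symm)
  · -- U' = ker trace is impossible: T is trace-zero but does not commute with Pc 1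
    set T : (indSubmodule H τ) →ₗ[ℂ] (indSubmodule H τ) :=
      Pc H τ g₁ * (indRep H τ) g₁⁻¹ * Pc H τ 1 with hT
    have hdis : Pc H τ 1 * Pc H τ g₁ = 0 := by
      apply Pc_disjoint
      rw [one_mul, H.inv_mem_iff]
      exact hg₁
    have hTtr : T ∈ LinearMap.ker (LinearMap.trace ℂ (indSubmodule H τ)) := by
      rw [LinearMap.mem_ker, hT, LinearMap.trace_mul_comm, ← mul_assoc, hdis, zero_mul,
        map_zero]
    have hTspan : T ∈ Submodule.span ℂ (Set.range (Pc H τ)) := by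
      have h5 : T ∈ U' := by rw [htop]; exact hTtr
      rw [hU', Submodule.mem_inf] at h5
      exact h5.1
    -- every element of the span commutes with Pc 1
    have hcomm : T * Pc H τ 1 = Pc H τ 1 * T := by
      refine Submodule.span_induction (p := fun B _ =>
        B * Pc H τ 1 = Pc H τ 1 * B) ?_ ?_ ?_ ?_ hTspan
      · rintro B ⟨g', rfl⟩
        show Pc H τ g' * Pc H τ 1 = Pc H τ 1 * Pc H τ g'
        exact Pc_comm H τ g' 1
      · show (0 : _ →ₗ[ℂ] _) * Pc H τ 1 = Pc H τ 1 * 0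
        rw [zero_mul, mul_zero]
      · intro B C _ _ hB hC
        show (B + C) * Pc H τ 1 = Pc H τ 1 * (B + C)
        rw [add_mul, mul_add, hB, hC]
      · intro c B _ hB
        show (c • B) * Pc H τ 1 = Pc H τ 1 * (c • B)
        rw [smul_mul_assoc, mul_smul_comm, hB]
    have hTP : T * Pc H τ 1 = T := by
      rw [hT, mul_assoc, Pc_idem]
    have hPT : Pc H τ 1 * T = 0 := by
      rw [hT, ← mul_assoc, ← mul_assoc, hdis, zero_mul, zero_mul]
    have hT0 : T = 0 := by rw [← hTP, hcomm, hPT]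
    -- but T f₀ ≠ 0
    have hval : (T f₀ : G → W) g₁ = w := by
      show ((Pc H τ g₁ ((indRep H τ) g₁⁻¹ (Pc H τ 1 f₀)) : indSubmodule H τ) : G → W) g₁ = w
      rw [Pc_coe, Pfull_apply, if_pos (by simpa using H.one_mem), indRep_coe]
      rw [Pc_coe, Pfull_apply]
      have h1 : g₁ * g₁⁻¹ = 1 := mul_inv_cancel g₁
      rw [h1, if_pos (by simpa using H.one_mem)]
      exact fSupp_one H τ w
    rw [hT0] at hval
    have : (0 : W) = w := hval
    exact hx₀ (by simpa [hw] using this.symm)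
end

section
/- Let G be a finite group and ρ : G → GL₂(ℂ) an irreducible 2-dimensional complex representation whose projective image in PGL₂(ℂ) is isomorphic to A₄. Then Ad(ρ) is irreducible. -/
open Matrix

section MatDefs

variable {G : Type*} [Group G] {n : ℕ}

/-- Irreducibility of a matrix representation `ρ : G →* GLₙ(ℂ)`. -/
def MatIrreducible (ρ : G →* GL (Fin n) ℂ) : Prop :=
  ∀ U : Submodule ℂ (Fin n → ℂ),
    (∀ g : G, ∀ v ∈ U, (ρ g : Matrix (Fin n) (Fin n) ℂ).mulVec v ∈ U) → U = ⊥ ∨ U = ⊤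

/-- Irreducibility of the adjoint `Ad ρ` of a matrix representation: the conjugation action
of `G` on the space of trace-zero `n × n` matrices is irreducible. -/
def MatAdIrreducible (ρ : G →* GL (Fin n) ℂ) : Prop :=
  LinearMap.ker (Matrix.traceLinearMap (Fin n) ℂ ℂ) ≠ ⊥ ∧
  ∀ U ≤ LinearMap.ker (Matrix.traceLinearMap (Fin n) ℂ ℂ),
    (∀ g : G, ∀ M ∈ U,
      (ρ g : Matrix (Fin n) (Fin n) ℂ) * M * ((ρ g)⁻¹ : GL (Fin n) ℂ) ∈ U) →
    U = ⊥ ∨ U = LinearMap.ker (Matrix.traceLinearMap (Fin n) ℂ ℂ)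

/-- The image of a matrix representation in `PGLₙ(ℂ)`. -/
def projImage (ρ : G →* GL (Fin n) ℂ) : Subgroup (GL (Fin n) ℂ ⧸ Subgroup.center (GL (Fin n) ℂ)) :=
  ((QuotientGroup.mk' (Subgroup.center (GL (Fin n) ℂ))).comp ρ).range

end MatDefs

/-! ### Auxiliary lemmas -/

private lemma sq_eq_neg_det_smul (M : Matrix (Fin 2) (Fin 2) ℂ) (h : M.trace = 0) :
    M * M = (-M.det) • (1 : Matrix (Fin 2) (Fin 2) ℂ) := by
  rw [Matrix.trace_fin_two] at h
  ext i j
  rw [Matrix.det_fin_two]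
  fin_cases i <;> fin_cases j <;>
    simp [Matrix.mul_apply, Fin.sum_univ_two, Matrix.one_apply]
  · linear_combination (M 0 0) * h
  · linear_combination (M 0 1) * h
  · linear_combination (M 1 0) * h
  · linear_combination (M 1 1) * h

private lemma mem_span_one_M {M A : Matrix (Fin 2) (Fin 2) ℂ}
    (hns : ¬ (M 0 1 = 0 ∧ M 1 0 = 0 ∧ M 0 0 = M 1 1))
    (hA : A * M = M * A) : ∃ α β : ℂ, A = α • 1 + β • M := by
  have e : ∀ i j, (A * M) i j = (M * A) i j := fun i j => by rw [hA]
  have e00 := e 0 0; have e01 := e 0 1; have e10 := e 1 0; have e11 := e 1 1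
  simp only [Matrix.mul_apply, Fin.sum_univ_two] at e00 e01 e10 e11
  by_cases hb : M 0 1 ≠ 0
  · refine ⟨A 0 0 - (A 0 1 / M 0 1) * M 0 0, A 0 1 / M 0 1, ?_⟩
    ext i j; fin_cases i <;> fin_cases j <;> simp [Matrix.one_apply] <;> field_simp
    · linear_combination -e00
    · linear_combination -e01
  · push_neg at hb
    by_cases hc : M 1 0 ≠ 0
    · refine ⟨A 0 0 - (A 1 0 / M 1 0) * M 0 0, A 1 0 / M 1 0, ?_⟩
      ext i j; fin_cases i <;> fin_cases j <;> simp [Matrix.one_apply] <;> field_simp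
      · linear_combination e00
      · linear_combination e10
    · push_neg at hc
      have hd : M 0 0 ≠ M 1 1 := by tauto
      have hd' : M 0 0 - M 1 1 ≠ 0 := sub_ne_zero.mpr hd
      have ha01 : A 0 1 = 0 := by
        have h2 : A 0 1 * (M 1 1 - M 0 0) = 0 := by
          linear_combination e01 + (A 1 1 - A 0 0) * hb
        rcases mul_eq_zero.mp h2 with h | h
        · exact h
        · exact absurd h (sub_ne_zero.mpr (Ne.symm hd))
      have ha10 : A 1 0 = 0 := by
        have h2 : A 1 0 * (M 0 0 - M 1 1) = 0 := by
          linear_combination e10 + (A 0 0 - A 1 1) * hc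
        rcases mul_eq_zero.mp h2 with h | h
        · exact h
        · exact absurd h hd'
      refine ⟨A 0 0 - ((A 0 0 - A 1 1) / (M 0 0 - M 1 1)) * M 0 0,
        (A 0 0 - A 1 1) / (M 0 0 - M 1 1), ?_⟩
      ext i j
      fin_cases i <;> fin_cases j <;>
        simp [Matrix.one_apply, hb, hc, ha01, ha10] <;> field_simp
      ring

private lemma commute_of_commute_nonscalar {M A B : Matrix (Fin 2) (Fin 2) ℂ}
    (hns : ¬ (M 0 1 = 0 ∧ M 1 0 = 0 ∧ M 0 0 = M 1 1))
    (hA : A * M = M * A) (hB : B * M = M * B) : A * B = B * A := by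
  obtain ⟨α, β, rfl⟩ := mem_span_one_M hns hA
  obtain ⟨γ, δ, rfl⟩ := mem_span_one_M hns hB
  simp only [mul_add, add_mul, Matrix.smul_mul, Matrix.mul_smul, one_mul, mul_one, smul_smul]
  rw [mul_comm α γ, mul_comm α δ, mul_comm β γ, mul_comm β δ]
  abel

/-- The trace bilinear form on `2 × 2` complex matrices. -/
noncomputable abbrev traceB : LinearMap.BilinForm ℂ (Matrix (Fin 2) (Fin 2) ℂ) :=
  LinearMap.mk₂ ℂ (fun M N => (M * N).trace)
    (fun M M' N => by simp [add_mul])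
    (fun c M N => by simp [Matrix.smul_mul])
    (fun M N N' => by simp [mul_add])
    (fun c M N => by simp [Matrix.mul_smul])

private lemma traceB_apply (M N : Matrix (Fin 2) (Fin 2) ℂ) : traceB M N = (M * N).trace := rfl

private lemma traceB_refl : traceB.IsRefl := by
  intro M N h
  rw [traceB_apply, trace_mul_comm] at h
  exact h

private lemma trace_mul_std (m : Matrix (Fin 2) (Fin 2) ℂ) (i j : Fin 2) :
    (m * single j i 1).trace = m i j := by
  fin_cases i <;> fin_cases j <;>
    simp [Matrix.trace_fin_two, Matrix.mul_apply, Fin.sum_univ_two, Matrix.single]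

private lemma traceB_nondeg : traceB.Nondegenerate := by
  rw [LinearMap.BilinForm.Nondegenerate, traceB_refl.nondegenerate_iff_separatingLeft]
  intro m hm
  ext i j
  have := hm (single j i 1)
  rwa [traceB_apply, trace_mul_std] at this

/-- In `A₄` there exist two squares that do not commute; hence the projective image of `ρ`
cannot have all squares commuting. -/
private lemma not_all_sq_commute {G : Type*} [Group G] (ρ : G →* GL (Fin 2) ℂ)
    (hA4 : Nonempty (projImage ρ ≃* alternatingGroup (Fin 4))) :
    ¬ ∀ g h : G, ((ρ g : Matrix (Fin 2) (Fin 2) ℂ) * (ρ g : Matrix (Fin 2) (Fin 2) ℂ)) *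
        ((ρ h : Matrix (Fin 2) (Fin 2) ℂ) * (ρ h : Matrix (Fin 2) (Fin 2) ℂ)) =
      ((ρ h : Matrix (Fin 2) (Fin 2) ℂ) * (ρ h : Matrix (Fin 2) (Fin 2) ℂ)) *
        ((ρ g : Matrix (Fin 2) (Fin 2) ℂ) * (ρ g : Matrix (Fin 2) (Fin 2) ℂ)) := by
  intro hcomm
  obtain ⟨e⟩ := hA4
  obtain ⟨x, y, hxy⟩ : ∃ x y : alternatingGroup (Fin 4), x^2*y^2 ≠ y^2*x^2 := by decide
  apply hxy
  set a := e.symm x with ha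
  set b := e.symm y with hb
  obtain ⟨g, hg⟩ := a.2
  obtain ⟨h, hh⟩ := b.2
  have hgl : (ρ g) ^ 2 * (ρ h) ^ 2 = (ρ h) ^ 2 * (ρ g) ^ 2 := by
    apply Units.ext
    simp only [Units.val_mul, Units.val_pow_eq_pow_val, pow_two]
    simpa only [mul_assoc] using hcomm g h
  have key : a ^ 2 * b ^ 2 = b ^ 2 * a ^ 2 := by
    apply Subtype.ext
    push_cast
    simp only [MonoidHom.comp_apply] at hg hh
    rw [← hg, ← hh,
      ← _root_.map_pow (QuotientGroup.mk' (Subgroup.center (GL (Fin 2) ℂ))) (ρ g) 2,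
      ← _root_.map_pow (QuotientGroup.mk' (Subgroup.center (GL (Fin 2) ℂ))) (ρ h) 2,
      ← _root_.map_mul, ← _root_.map_mul, hgl]
  calc x ^ 2 * y ^ 2 = e a ^ 2 * e b ^ 2 := by rw [ha, hb]; simp
    _ = e (a ^ 2 * b ^ 2) := by simp
    _ = e (b ^ 2 * a ^ 2) := by rw [key]
    _ = y ^ 2 * x ^ 2 := by rw [ha, hb]; simp

/-- A nonzero trace-zero matrix spanning a conjugation-invariant line leads to a
contradiction. -/
private lemma no_invariant_line {G : Type*} [Group G] (ρ : G →* GL (Fin 2) ℂ)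
    (hirr : MatIrreducible ρ)
    (hA4 : Nonempty (projImage ρ ≃* alternatingGroup (Fin 4)))
    (M : Matrix (Fin 2) (Fin 2) ℂ) (hM0 : M ≠ 0) (htr : M.trace = 0)
    (hconj : ∀ g : G, ∃ c : ℂ,
      (ρ g : Matrix (Fin 2) (Fin 2) ℂ) * M * ((ρ g)⁻¹ : GL (Fin 2) ℂ) = c • M) : False := by
  have hmulinv : ∀ g : G,
      ((ρ g : Matrix (Fin 2) (Fin 2) ℂ)) * ((ρ g)⁻¹ : GL (Fin 2) ℂ) = 1 := fun g =>
    (ρ g).mul_inv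
  have hinvmul : ∀ g : G,
      (((ρ g)⁻¹ : GL (Fin 2) ℂ) : Matrix (Fin 2) (Fin 2) ℂ) * (ρ g) = 1 := fun g =>
    (ρ g).inv_mul
  -- conjugation relation rewritten: ρ g * M = c • (M * ρ g)
  have hrel : ∀ g : G, ∃ c : ℂ, c ≠ 0 ∧
      (ρ g : Matrix (Fin 2) (Fin 2) ℂ) * M = c • (M * (ρ g : Matrix (Fin 2) (Fin 2) ℂ)) := by
    intro g
    obtain ⟨c, hc⟩ := hconj g
    refine ⟨c, ?_, ?_⟩
    · rintro rfl
      apply hM0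
      have : (ρ g : Matrix (Fin 2) (Fin 2) ℂ) * M * ((ρ g)⁻¹ : GL (Fin 2) ℂ) = 0 := by
        rw [hc, zero_smul]
      calc M = ((((ρ g)⁻¹ : GL (Fin 2) ℂ) : Matrix (Fin 2) (Fin 2) ℂ) * (ρ g)) * M *
              ((((ρ g)⁻¹ : GL (Fin 2) ℂ) : Matrix (Fin 2) (Fin 2) ℂ) * (ρ g)) := by
            rw [hinvmul g, one_mul, mul_one]
        _ = (((ρ g)⁻¹ : GL (Fin 2) ℂ) : Matrix (Fin 2) (Fin 2) ℂ) *
              ((ρ g : Matrix (Fin 2) (Fin 2) ℂ) * M * ((ρ g)⁻¹ : GL (Fin 2) ℂ)) *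
              (ρ g : Matrix (Fin 2) (Fin 2) ℂ) := by noncomm_ring
        _ = 0 := by rw [this]; simp
    · have := congrArg (· * (ρ g : Matrix (Fin 2) (Fin 2) ℂ)) hc
      rw [mul_assoc, mul_assoc, hinvmul g, mul_one, Matrix.smul_mul] at this
      rw [this]
  by_cases hdet : M.det = 0
  · -- nilpotent case : produce an invariant line in ℂ²
    have hM2 : M * M = 0 := by rw [sq_eq_neg_det_smul M htr, hdet]; simp
    set K := LinearMap.ker M.mulVecLin with hK
    have hKinv : ∀ g : G, ∀ v ∈ K, (ρ g : Matrix (Fin 2) (Fin 2) ℂ).mulVec v ∈ K := by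
      intro g v hv
      obtain ⟨c, hc0, hc⟩ := hrel g
      have hv' : M.mulVec v = 0 := hv
      simp only [hK, LinearMap.mem_ker, Matrix.mulVecLin_apply]
      have : M * (ρ g : Matrix (Fin 2) (Fin 2) ℂ) =
          c⁻¹ • ((ρ g : Matrix (Fin 2) (Fin 2) ℂ) * M) := by
        rw [hc, smul_smul, inv_mul_cancel₀ hc0, one_smul]
      calc M *ᵥ ((ρ g : Matrix (Fin 2) (Fin 2) ℂ) *ᵥ v)
          = (M * (ρ g : Matrix (Fin 2) (Fin 2) ℂ)) *ᵥ v := Matrix.mulVec_mulVec v _ _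
        _ = (c⁻¹ • ((ρ g : Matrix (Fin 2) (Fin 2) ℂ) * M)) *ᵥ v := by rw [this]
        _ = c⁻¹ • (((ρ g : Matrix (Fin 2) (Fin 2) ℂ) * M) *ᵥ v) := Matrix.smul_mulVec _ _ _
        _ = c⁻¹ • ((ρ g : Matrix (Fin 2) (Fin 2) ℂ) *ᵥ (M *ᵥ v)) := by
            rw [Matrix.mulVec_mulVec]
        _ = 0 := by rw [hv']; simp
    -- M ≠ 0 gives a vector v with M.mulVec v ≠ 0
    obtain ⟨i, j, hij⟩ : ∃ i j, M i j ≠ 0 := by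
      by_contra hcon
      push_neg at hcon
      exact hM0 (by ext i j; simpa using hcon i j)
    have hv : M.mulVec (Pi.single j 1) ≠ 0 := by
      intro h0
      apply hij
      have := congrFun h0 i
      simpa [Matrix.mulVec_single] using this
    rcases hirr K hKinv with h | h
    · -- K = ⊥, but M.mulVec (M.mulVec v) = 0 with M.mulVec v ≠ 0
      apply hv
      have hmem : M.mulVec (Pi.single j 1) ∈ K := by
        simp only [hK, LinearMap.mem_ker, Matrix.mulVecLin_apply, Matrix.mulVec_mulVec, hM2]
        exact Matrix.zero_mulVec _
      rw [h] at hmem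
      simpa using hmem
    · -- K = ⊤ : M = 0
      apply hv
      have hmem : Pi.single j 1 ∈ K := by rw [h]; trivial
      exact hmem
  · -- semisimple case
    have hd0 : -M.det ≠ 0 := neg_ne_zero.mpr hdet
    have hM2 : M * M = (-M.det) • 1 := sq_eq_neg_det_smul M htr
    have hns : ¬ (M 0 1 = 0 ∧ M 1 0 = 0 ∧ M 0 0 = M 1 1) := by
      rintro ⟨h1, h2, h3⟩
      apply hM0
      rw [Matrix.trace_fin_two] at htr
      have h00 : M 0 0 = 0 := by linear_combination htr/2 + h3/2
      ext i j
      fin_cases i <;> fin_cases j <;> simp [h1, h2, h00]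
      · rw [← h3]; exact h00
    -- squares of ρ commute with M
    have hsq : ∀ g : G, ((ρ g : Matrix (Fin 2) (Fin 2) ℂ) * (ρ g : Matrix (Fin 2) (Fin 2) ℂ)) * M
        = M * ((ρ g : Matrix (Fin 2) (Fin 2) ℂ) * (ρ g : Matrix (Fin 2) (Fin 2) ℂ)) := by
      intro g
      obtain ⟨c, hc0, hc⟩ := hrel g
      have hc2 : c * c = 1 := by
        have h1 : ((ρ g : Matrix (Fin 2) (Fin 2) ℂ)) * (M * M) =
            (c * c) • ((M * M) * (ρ g : Matrix (Fin 2) (Fin 2) ℂ)) := by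
          calc ((ρ g : Matrix (Fin 2) (Fin 2) ℂ)) * (M * M)
              = ((ρ g : Matrix (Fin 2) (Fin 2) ℂ) * M) * M := by rw [mul_assoc]
            _ = (c • (M * (ρ g : Matrix (Fin 2) (Fin 2) ℂ))) * M := by rw [hc]
            _ = c • (M * ((ρ g : Matrix (Fin 2) (Fin 2) ℂ) * M)) := by
                rw [Matrix.smul_mul, mul_assoc]
            _ = c • (M * (c • (M * (ρ g : Matrix (Fin 2) (Fin 2) ℂ)))) := by rw [hc]
            _ = (c * c) • ((M * M) * (ρ g : Matrix (Fin 2) (Fin 2) ℂ)) := by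
                rw [Matrix.mul_smul, smul_smul, mul_assoc]
        rw [hM2] at h1
        simp only [Matrix.mul_smul, Matrix.smul_mul, mul_one, one_mul, smul_smul] at h1
        have hX : (ρ g : Matrix (Fin 2) (Fin 2) ℂ) ≠ 0 := by
          intro h0
          have h2 := hmulinv g
          rw [h0, Matrix.zero_mul] at h2
          have := congrFun (congrFun h2 0) 0
          simp [Matrix.one_apply] at this
        have hz : (-M.det - c * c * -M.det) • (ρ g : Matrix (Fin 2) (Fin 2) ℂ) = 0 := by
          rw [sub_smul, h1, sub_self]
        rcases smul_eq_zero.mp hz with h | h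
        · have h2 : (-M.det) * (1 - c * c) = 0 := by linear_combination h
          rcases mul_eq_zero.mp h2 with h3 | h3
          · exact absurd h3 hd0
          · linear_combination -h3
        · exact absurd h hX
      calc ((ρ g : Matrix (Fin 2) (Fin 2) ℂ) * (ρ g : Matrix (Fin 2) (Fin 2) ℂ)) * M
          = (ρ g : Matrix (Fin 2) (Fin 2) ℂ) * ((ρ g : Matrix (Fin 2) (Fin 2) ℂ) * M) := by
            rw [mul_assoc]
        _ = (ρ g : Matrix (Fin 2) (Fin 2) ℂ) * (c • (M * (ρ g : Matrix (Fin 2) (Fin 2) ℂ))) := by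
            rw [hc]
        _ = c • (((ρ g : Matrix (Fin 2) (Fin 2) ℂ) * M) * (ρ g : Matrix (Fin 2) (Fin 2) ℂ)) := by
            rw [Matrix.mul_smul, mul_assoc]
        _ = c • ((c • (M * (ρ g : Matrix (Fin 2) (Fin 2) ℂ))) * (ρ g : Matrix (Fin 2) (Fin 2) ℂ)) := by
            rw [hc]
        _ = (c * c) • (M * ((ρ g : Matrix (Fin 2) (Fin 2) ℂ) * (ρ g : Matrix (Fin 2) (Fin 2) ℂ))) := by
            rw [Matrix.smul_mul, smul_smul, mul_assoc]
        _ = M * ((ρ g : Matrix (Fin 2) (Fin 2) ℂ) * (ρ g : Matrix (Fin 2) (Fin 2) ℂ)) := by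
            rw [hc2, one_smul]
    exact not_all_sq_commute ρ hA4 (fun g h =>
      commute_of_commute_nonscalar hns (hsq g) (hsq h))

private lemma line_case {G : Type*} [Group G] (ρ : G →* GL (Fin 2) ℂ)
    (hirr : MatIrreducible ρ)
    (hA4 : Nonempty (projImage ρ ≃* alternatingGroup (Fin 4)))
    (U : Submodule ℂ (Matrix (Fin 2) (Fin 2) ℂ))
    (hU : U ≤ LinearMap.ker (Matrix.traceLinearMap (Fin 2) ℂ ℂ))
    (hinv : ∀ g : G, ∀ M ∈ U,
      (ρ g : Matrix (Fin 2) (Fin 2) ℂ) * M * ((ρ g)⁻¹ : GL (Fin 2) ℂ) ∈ U)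
    (h1 : Module.finrank ℂ U = 1) : False := by
  obtain ⟨v, hv0, hvspan⟩ := finrank_eq_one_iff'.mp h1
  refine no_invariant_line ρ hirr hA4 (v : Matrix (Fin 2) (Fin 2) ℂ) ?_ ?_ ?_
  · intro h
    exact hv0 (Subtype.ext h)
  · exact LinearMap.mem_ker.mp (hU v.2)
  · intro g
    have hm := hinv g (v : Matrix (Fin 2) (Fin 2) ℂ) v.2
    obtain ⟨c, hc⟩ := hvspan ⟨_, hm⟩
    refine ⟨c, ?_⟩
    have := congrArg (fun x : U => (x : Matrix (Fin 2) (Fin 2) ℂ)) hc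
    simpa using this.symm

/-- Let `G` be a finite group and `ρ : G → GL₂(ℂ)` an irreducible
2-dimensional complex representation whose projective image in `PGL₂(ℂ)` is isomorphic
to `A₄`. Then `Ad ρ` is irreducible. -/
theorem matAdIrreducible_of_projImage_A4
    {G : Type*} [Group G] [Finite G] (ρ : G →* GL (Fin 2) ℂ)
    (hirr : MatIrreducible ρ)
    (hA4 : Nonempty (projImage ρ ≃* alternatingGroup (Fin 4))) :
    MatAdIrreducible ρ := by
  classical
  constructor
  · -- the space of trace-zero matrices is nonzero
    intro h
    have hmem : (single 0 1 1 : Matrix (Fin 2) (Fin 2) ℂ) ∈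
        LinearMap.ker (Matrix.traceLinearMap (Fin 2) ℂ ℂ) := by
      simp [LinearMap.mem_ker, Matrix.trace_fin_two, Matrix.single]
    rw [h, Submodule.mem_bot] at hmem
    have := congrFun (congrFun hmem 0) 1
    simp [Matrix.single] at this
  · intro U hU hinv
    by_cases h0 : U = ⊥
    · exact Or.inl h0
    by_cases hWeq : U = LinearMap.ker (Matrix.traceLinearMap (Fin 2) ℂ ℂ)
    · exact Or.inr hWeq
    exfalso
    -- dimension bookkeeping
    have h4 : Module.finrank ℂ (Matrix (Fin 2) (Fin 2) ℂ) = 4 := by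
      simp [Module.finrank_matrix]
    have hW3 : Module.finrank ℂ (LinearMap.ker (Matrix.traceLinearMap (Fin 2) ℂ ℂ)) = 3 := by
      have hsurj : LinearMap.range (Matrix.traceLinearMap (Fin 2) ℂ ℂ) = ⊤ := by
        rw [LinearMap.range_eq_top]
        intro c
        exact ⟨c • single 0 0 1, by simp [Matrix.trace_fin_two, Matrix.single]⟩
      have hrn := LinearMap.finrank_range_add_finrank_ker (Matrix.traceLinearMap (Fin 2) ℂ ℂ)
      rw [hsurj, finrank_top, h4, Module.finrank_self] at hrn
      omega
    have hpos : 0 < Module.finrank ℂ U := by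
      rcases Nat.eq_zero_or_pos (Module.finrank ℂ U) with h | h
      · exact absurd (Submodule.finrank_eq_zero.mp h) h0
      · exact h
    have hlt : Module.finrank ℂ U < 3 := by
      rw [← hW3]
      exact Submodule.finrank_lt_finrank_of_lt (lt_of_le_of_ne hU hWeq)
    interval_cases hfr : Module.finrank ℂ U
    · -- dimension 1
      exact line_case ρ hirr hA4 U hU hinv hfr
    · -- dimension 2 : pass to the orthogonal complement w.r.t. the trace form
      set N : Submodule ℂ (Matrix (Fin 2) (Fin 2) ℂ) :=
        Submodule.span ℂ {(1 : Matrix (Fin 2) (Fin 2) ℂ)} ⊔ U with hN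
      set U' : Submodule ℂ (Matrix (Fin 2) (Fin 2) ℂ) := traceB.orthogonal N with hU'
      have hU'W : U' ≤ LinearMap.ker (Matrix.traceLinearMap (Fin 2) ℂ ℂ) := by
        intro m hm
        have h1m := hm 1 (Submodule.mem_sup_left (Submodule.mem_span_singleton_self 1))
        rw [traceB_apply, one_mul] at h1m
        simpa [LinearMap.mem_ker] using h1m
      have hU'inv : ∀ g : G, ∀ m ∈ U',
          (ρ g : Matrix (Fin 2) (Fin 2) ℂ) * m * ((ρ g)⁻¹ : GL (Fin 2) ℂ) ∈ U' := by
        intro g m hm n hn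
        obtain ⟨p, hp, u, hu, rfl⟩ := Submodule.mem_sup.mp hn
        obtain ⟨c, rfl⟩ := Submodule.mem_span_singleton.mp hp
        rw [map_add, LinearMap.add_apply, _root_.map_smul,
          LinearMap.smul_apply, traceB_apply, traceB_apply]
        have htrm : m.trace = 0 := by simpa [LinearMap.mem_ker] using hU'W hm
        have htr1 : ((1 : Matrix (Fin 2) (Fin 2) ℂ) *
            ((ρ g : Matrix (Fin 2) (Fin 2) ℂ) * m * ((ρ g)⁻¹ : GL (Fin 2) ℂ))).trace = 0 := by
          rw [one_mul, Matrix.trace_mul_cycle]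
          rw [show (((ρ g)⁻¹ : GL (Fin 2) ℂ) : Matrix (Fin 2) (Fin 2) ℂ) * ((ρ g) : _) = 1
            from (ρ g).inv_mul, one_mul, htrm]
        have hu' : (((ρ g)⁻¹ : GL (Fin 2) ℂ) : Matrix (Fin 2) (Fin 2) ℂ) * u *
            (ρ g : Matrix (Fin 2) (Fin 2) ℂ) ∈ U := by
          have := hinv g⁻¹ u hu
          rwa [map_inv, inv_inv] at this
        have htru : (u * ((ρ g : Matrix (Fin 2) (Fin 2) ℂ) * m *
            ((ρ g)⁻¹ : GL (Fin 2) ℂ))).trace = 0 := by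
          have key := hm _ (Submodule.mem_sup_right hu' : _ ∈ N)
          rw [traceB_apply] at key
          calc (u * ((ρ g : Matrix (Fin 2) (Fin 2) ℂ) * m *
              ((ρ g)⁻¹ : GL (Fin 2) ℂ))).trace
              = ((u * (ρ g : Matrix (Fin 2) (Fin 2) ℂ) * m) *
                (((ρ g)⁻¹ : GL (Fin 2) ℂ) : Matrix (Fin 2) (Fin 2) ℂ)).trace := by
                congr 1; noncomm_ring
            _ = ((((ρ g)⁻¹ : GL (Fin 2) ℂ) : Matrix (Fin 2) (Fin 2) ℂ) *
                (u * (ρ g : Matrix (Fin 2) (Fin 2) ℂ) * m)).trace :=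
                Matrix.trace_mul_comm _ _
            _ = ((((ρ g)⁻¹ : GL (Fin 2) ℂ) : Matrix (Fin 2) (Fin 2) ℂ) * u *
                (ρ g : Matrix (Fin 2) (Fin 2) ℂ) * m).trace := by
                congr 1; noncomm_ring
            _ = 0 := key
        rw [htr1, htru, smul_zero, add_zero]
      have hNrank : Module.finrank ℂ N = 3 := by
        have h1r : Module.finrank ℂ
            (Submodule.span ℂ {(1 : Matrix (Fin 2) (Fin 2) ℂ)}) = 1 :=
          finrank_span_singleton one_ne_zero
        have hinf : Submodule.span ℂ {(1 : Matrix (Fin 2) (Fin 2) ℂ)} ⊓ U = ⊥ := by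
          rw [eq_bot_iff]
          rintro x ⟨hx1, hxU⟩
          obtain ⟨c, rfl⟩ := Submodule.mem_span_singleton.mp hx1
          have htr : (c • (1 : Matrix (Fin 2) (Fin 2) ℂ)).trace = 0 := by
            simpa [LinearMap.mem_ker] using hU hxU
          have h2 : c * 2 = 0 := by
            simpa [Matrix.trace_smul, Matrix.trace_one] using htr
          have hc : c = 0 := (mul_eq_zero.mp h2).resolve_right two_ne_zero
          simp only [hc, zero_smul]
          exact Submodule.zero_mem ⊥
        have := Submodule.finrank_sup_add_finrank_inf_eq
          (Submodule.span ℂ {(1 : Matrix (Fin 2) (Fin 2) ℂ)}) U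
        rw [hinf, h1r, hfr, finrank_bot] at this
        rw [hN]
        omega
      have hU'rank : Module.finrank ℂ U' = 1 := by
        rw [hU', LinearMap.BilinForm.finrank_orthogonal traceB_nondeg N,
          h4, hNrank]
      exact line_case ρ hirr hA4 U' hU'W hU'inv hU'rank
end

section
/- Let G be a finite group acting on a finite-dimensional complex vector space U, and let W ≤ G be a normal abelian subgroup such that U decomposes as a direct sum of 1-dimensional weight spaces U_χ over a set Λ of characters χ of W, with G permuting the weight spaces transitively (g·U_χ = U_{gχ} for the induced action of G on characters, transitive on Λ). Then U is an irreducible G-representation. -/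
open Module LinearMap

variable {G : Type*} [Group G] {V : Type*} [AddCommGroup V] [Module ℂ V]

section Weights

variable {G : Type*} [Group G] {U : Type*} [AddCommGroup U] [Module ℂ U]

/-- The weight space of a character `χ` of a subgroup `W` in a representation. -/
def weightSpace (ρ : Representation ℂ G U) (W : Subgroup G) (χ : W →* ℂˣ) :
    Submodule ℂ U where
  carrier := {u | ∀ w : W, ρ (w : G) u = (χ w : ℂ) • u}
  add_mem' := by intro a b ha hb w; simp [map_add, ha w, hb w, smul_add]
  zero_mem' := by intro w; simp
  smul_mem' := by intro c u hu w; rw [map_smul, hu w, smul_comm]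

/-- The action of `g ∈ G` on characters of a normal subgroup `W`: `(g·χ)(w) = χ(g⁻¹ w g)`. -/
def conjChar {G : Type*} [Group G] (W : Subgroup G) [hN : W.Normal] (g : G)
    (χ : W →* ℂˣ) : W →* ℂˣ :=
  χ.comp (MulAut.conjNormal (g⁻¹ : G) : MulAut W).toMonoidHom

end Weights


section AuxProj
variable {G : Type*} [Group G] {U : Type*} [AddCommGroup U] [Module ℂ U]

lemma proj_apply (ρ : Representation ℂ G U) (W : Subgroup G) [Fintype W]
    (χ χ' : W →* ℂˣ) (v : U) (hv : v ∈ weightSpace ρ W χ') :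
    ((Fintype.card W : ℂ)⁻¹ • ∑ w : W, (((χ w)⁻¹ : ℂˣ) : ℂ) • (ρ (w : G) : U →ₗ[ℂ] U)) v
      = if χ = χ' then v else 0 := by
  have key : ∀ w : W, (((χ w)⁻¹ : ℂˣ) : ℂ) • ρ (w : G) v
      = ((((χ' * χ⁻¹) w : ℂˣ)) : ℂ) • v := by
    intro w
    rw [hv w, smul_smul]
    simp [mul_comm]
  simp only [LinearMap.smul_apply, LinearMap.sum_apply, LinearMap.coe_smul, Pi.smul_apply]
  rw [Finset.sum_congr rfl (fun w _ => key w), ← Finset.sum_smul]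
  by_cases h : χ = χ'
  · subst h
    simp [smul_smul,
      inv_mul_cancel₀ (Nat.cast_ne_zero.mpr Fintype.card_ne_zero : (Fintype.card W : ℂ) ≠ 0)]
  · have hψ : (Units.coeHom ℂ).comp (χ' * χ⁻¹) ≠ 1 := by
      intro hc
      apply h
      ext w
      have h1 : ((χ' * χ⁻¹) w : ℂ) = 1 := congrArg (fun f : W →* ℂ => f w) hc
      have h2 : (χ' * χ⁻¹) w = 1 := Units.ext h1
      simp only [MonoidHom.mul_apply, MonoidHom.inv_apply, mul_inv_eq_one] at h2
      exact congrArg Units.val h2.symm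
    have hz : ∑ w : W, (((χ' * χ⁻¹) w : ℂˣ) : ℂ) = 0 := by
      simpa using sum_hom_units_eq_zero ((Units.coeHom ℂ).comp (χ' * χ⁻¹)) hψ
    rw [hz, if_neg h, zero_smul, smul_zero]

end AuxProj

/-- Let `G` be a finite group acting on a finite-dimensional complex vector
space `U`, and let `W` be a normal abelian subgroup of `G` such that `U` is the direct sum of
the 1-dimensional weight spaces `U_χ` for `χ` in the set `Λ` of characters of `W` with
nonzero weight space, with `G` permuting the weight spaces (`g · U_χ = U_{g·χ}`) transitively
on `Λ`. Then `U` is an irreducible `G`-representation. -/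
theorem irreducible_of_transitive_one_dimensional_weight_spaces
    {G : Type*} [Group G] [Finite G] {U : Type*} [AddCommGroup U] [Module ℂ U]
    [FiniteDimensional ℂ U] [Nontrivial U]
    (ρ : Representation ℂ G U) (W : Subgroup G) (hN : W.Normal)
    (hab : ∀ a b : W, a * b = b * a)
    (Λ : Set (W →* ℂˣ)) (hΛ : Λ = {χ | weightSpace ρ W χ ≠ ⊥})
    (hsum : (⨆ χ ∈ Λ, weightSpace ρ W χ) = ⊤)
    (hdim : ∀ χ ∈ Λ, Module.finrank ℂ (weightSpace ρ W χ) = 1)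
    (hperm : ∀ (g : G) (χ : W →* ℂˣ),
      Submodule.map (ρ g) (weightSpace ρ W χ) = weightSpace ρ W (conjChar W g χ))
    (htrans : ∀ χ ∈ Λ, ∀ χ' ∈ Λ, ∃ g : G, conjChar W g χ = χ') :
    ρ.IsIrreducible' := by
  classical
  haveI : Fintype W := Fintype.ofFinite W
  refine ⟨inferInstance, ?_⟩
  intro U' hinv
  by_cases hbot : U' = ⊥
  · exact Or.inl hbot
  right
  obtain ⟨u, huU', hu0⟩ := Submodule.exists_mem_ne_zero_of_ne_bot hbot
  set P : (W →* ℂˣ) → (U →ₗ[ℂ] U) := fun χ =>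
    (Fintype.card W : ℂ)⁻¹ • ∑ w : W, (((χ w)⁻¹ : ℂˣ) : ℂ) • (ρ (w : G) : U →ₗ[ℂ] U) with hP
  have hPmem : ∀ χ, P χ u ∈ U' := by
    intro χ
    simp only [hP, LinearMap.smul_apply, LinearMap.sum_apply, LinearMap.coe_smul, Pi.smul_apply]
    exact U'.smul_mem _ (Submodule.sum_mem _ fun w _ => U'.smul_mem _ (hinv _ u huU'))
  have hu_top : u ∈ ⨆ χ : Λ, weightSpace ρ W (χ : W →* ℂˣ) := by
    rw [iSup_subtype'', hsum]
    trivial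
  obtain ⟨f, hf, hfs⟩ := (Submodule.mem_iSup_iff_exists_finsupp _ _).mp hu_top
  have hex : ∃ i : Λ, f i ≠ 0 := by
    by_contra hc
    push_neg at hc
    have hf0 : f = 0 := Finsupp.ext hc
    exact hu0 (by rw [← hfs, hf0, Finsupp.sum_zero_index])
  obtain ⟨i, hi⟩ := hex
  have hPi : P (i : W →* ℂˣ) u = f i := by
    rw [← hfs, Finsupp.sum, map_sum]
    have hterm : ∀ j : Λ, P (i : W →* ℂˣ) (f j) = if i = j then f j else 0 := by
      intro j
      rw [hP, proj_apply ρ W _ _ (f j) (hf j)]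
      congr 1
      simp [Subtype.ext_iff]
    rw [Finset.sum_congr rfl (fun j _ => hterm j), Finset.sum_ite_eq,
      if_pos (Finsupp.mem_support_iff.mpr hi)]
  have hximem : f i ∈ U' := hPi ▸ hPmem _
  have hspan : weightSpace ρ W (i : W →* ℂˣ) = Submodule.span ℂ {f i} := by
    refine (Submodule.eq_of_le_of_finrank_le ?_ ?_).symm
    · rw [Submodule.span_le, Set.singleton_subset_iff]
      exact hf i
    · rw [hdim _ i.2, finrank_span_singleton hi]
  have hwi : weightSpace ρ W (i : W →* ℂˣ) ≤ U' := by
    rw [hspan, Submodule.span_le, Set.singleton_subset_iff]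
    exact hximem
  have hall : ∀ χ' ∈ Λ, weightSpace ρ W χ' ≤ U' := by
    intro χ' hχ'
    obtain ⟨g, hg⟩ := htrans _ i.2 χ' hχ'
    rw [← hg, ← hperm]
    rintro _ ⟨y, hy, rfl⟩
    exact hinv g y (hwi hy)
  refine le_antisymm ?_ ?_
  · exact le_top
  · rw [← hsum]
    exact iSup_le fun χ => iSup_le fun hχ => hall χ hχ
end
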